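/- arXiv:1607.01660 — 5 statements merged into one kernel-verified Lean document; each statement's English description precedes it below -/
import Mathlib

section
/- Let $n \le q < \infty$, let $h \in L_{q,loc}(\mathbb{R}^n)$ be nonnegative, and define $\delta_q(x,y) = \|x-y\| \sup_{Q \ni x,y}(|Q|^{-1}\int_Q h^q)^{1/q}$. Let $d_q(x,y)$ be the geodesic (chain) distance: the infimum of $\sum_{i=0}^{m-1} \delta_q(x_i,x_{i+1})$ over all finite chains from $x$ to $y$. Then $d_q(x,y) \le \delta_q(x,y) \le 16\, d_q(x,y)$ for all $x,y \in \mathbb{R}^n$. -/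
open MeasureTheory ENNReal Metric

/-- sup over closed axis-parallel cubes (sup-norm closed balls) containing `x` and `y`
of `(|Q|⁻¹ ∫_Q w)^{1/q}`. -/
noncomputable def cubeSup (n : ℕ) (q : ℝ) (w : (Fin n → ℝ) → ℝ≥0∞) (x y : Fin n → ℝ) : ℝ≥0∞ :=
  ⨆ (c : Fin n → ℝ) (r : ℝ) (_ : 0 < r) (_ : x ∈ closedBall c r) (_ : y ∈ closedBall c r),
    ((∫⁻ u in closedBall c r, w u) / volume (closedBall c r)) ^ (1 / q)

/-- `δ_q(x,y:h) = ‖x-y‖ · sup_{Q ∋ x,y}(|Q|⁻¹ ∫_Q h^q)^{1/q}` (the weight `w` stands for `h^q`). -/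
noncomputable def deltaQ (n : ℕ) (q : ℝ) (w : (Fin n → ℝ) → ℝ≥0∞) (x y : Fin n → ℝ) : ℝ≥0∞ :=
  ENNReal.ofReal ‖x - y‖ * cubeSup n q w x y

/-- The geodesic (chain) distance associated with `δ_q`. -/
noncomputable def geoQ (n : ℕ) (q : ℝ) (w : (Fin n → ℝ) → ℝ≥0∞) (x y : Fin n → ℝ) : ℝ≥0∞ :=
  ⨅ (m : ℕ) (z : ℕ → Fin n → ℝ) (_ : z 0 = x) (_ : z m = y),
    ∑ i ∈ Finset.range m, deltaQ n q w (z i) (z (i + 1))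


lemma le_cubeSup {n : ℕ} {q : ℝ} {w : (Fin n → ℝ) → ℝ≥0∞} {x y c : Fin n → ℝ} {r : ℝ}
    (hr : 0 < r) (hx : x ∈ closedBall c r) (hy : y ∈ closedBall c r) :
    ((∫⁻ u in closedBall c r, w u) / volume (closedBall c r)) ^ (1 / q) ≤ cubeSup n q w x y :=
  le_iSup_of_le c (le_iSup_of_le r (le_iSup_of_le hr (le_iSup_of_le hx (le_iSup_of_le hy le_rfl))))

lemma avg_le {n : ℕ} {q : ℝ} (hn : 1 ≤ n) (hq : (n : ℝ) ≤ q) (w : (Fin n → ℝ) → ℝ≥0∞)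
    (c z : Fin n → ℝ) {r s : ℝ} (hr : 0 < r) (hrs : r ≤ s)
    (hsub : closedBall c r ⊆ closedBall z s) :
    ENNReal.ofReal (r / s) *
        ((∫⁻ u in closedBall c r, w u) / volume (closedBall c r)) ^ (1 / q) ≤
      ((∫⁻ u in closedBall z s, w u) / volume (closedBall z s)) ^ (1 / q) := by
  have hs : 0 < s := hr.trans_le hrs
  have hn0 : (0 : ℝ) < n := by exact_mod_cast hn
  have hq0 : 0 < q := hn0.trans_le hq
  have hq1 : 0 ≤ 1 / q := by positivity
  have hVs : volume (closedBall c r) = ENNReal.ofReal ((2 * r) ^ n) := by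
    rw [Real.volume_pi_closedBall c hr.le, Fintype.card_fin]
  have hVb : volume (closedBall z s) = ENNReal.ofReal ((2 * s) ^ n) := by
    rw [Real.volume_pi_closedBall z hs.le, Fintype.card_fin]
  set I : ℝ≥0∞ := ∫⁻ u in closedBall c r, w u with hI
  have hmono : (I / volume (closedBall z s)) ^ (1 / q) ≤
      ((∫⁻ u in closedBall z s, w u) / volume (closedBall z s)) ^ (1 / q) := by
    refine ENNReal.rpow_le_rpow (ENNReal.div_le_div_right ?_ _) hq1
    exact lintegral_mono_set hsub
  refine le_trans ?_ hmono
  have hVsne : volume (closedBall c r) ≠ 0 := by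
    rw [hVs]; exact (ENNReal.ofReal_pos.mpr (by positivity)).ne'
  have hVsnt : volume (closedBall c r) ≠ ⊤ := by rw [hVs]; exact ENNReal.ofReal_ne_top
  have key : I / volume (closedBall z s) =
      (I / volume (closedBall c r)) * (volume (closedBall c r) / volume (closedBall z s)) := by
    rw [div_eq_mul_inv, div_eq_mul_inv, div_eq_mul_inv, mul_assoc,
      ← mul_assoc (volume (closedBall c r))⁻¹, ENNReal.inv_mul_cancel hVsne hVsnt, one_mul]
  rw [key, ENNReal.mul_rpow_of_nonneg _ _ hq1, mul_comm]
  gcongr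
  have hratio : volume (closedBall c r) / volume (closedBall z s)
      = (ENNReal.ofReal (r / s)) ^ (n : ℕ) := by
    rw [hVs, hVb, ← ENNReal.ofReal_div_of_pos (by positivity), ← ENNReal.ofReal_pow (by positivity)]
    congr 1
    rw [← div_pow, mul_div_mul_left _ _ (two_ne_zero)]
  rw [hratio, ← ENNReal.rpow_natCast, ← ENNReal.rpow_mul]
  have hx1 : ENNReal.ofReal (r / s) ≤ 1 := by
    rw [← ENNReal.ofReal_one]
    exact ENNReal.ofReal_le_ofReal (div_le_one_of_le₀ hrs hs.le)
  calc ENNReal.ofReal (r / s) = ENNReal.ofReal (r / s) ^ (1 : ℝ) := (ENNReal.rpow_one _).symm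
    _ ≤ ENNReal.ofReal (r / s) ^ ((n : ℝ) * (1 / q)) := by
        apply ENNReal.rpow_le_rpow_of_exponent_ge hx1
        rw [mul_one_div, div_le_one hq0]
        exact hq

lemma edge_bound {n : ℕ} {q : ℝ} (hn : 1 ≤ n) (hq : (n : ℝ) ≤ q) (w : (Fin n → ℝ) → ℝ≥0∞)
    {c : Fin n → ℝ} {r : ℝ} (hr : 0 < r) {a b : Fin n → ℝ}
    (ha : a ∈ closedBall c (2 * r)) :
    ENNReal.ofReal (‖a - b‖ * (r / max (3 * r) ‖a - b‖)) *
        ((∫⁻ u in closedBall c r, w u) / volume (closedBall c r)) ^ (1 / q)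
      ≤ deltaQ n q w a b := by
  set s : ℝ := max (3 * r) ‖a - b‖ with hsdef
  have hs3 : 3 * r ≤ s := le_max_left _ _
  have hs : 0 < s := lt_of_lt_of_le (by linarith) hs3
  have hrs : r ≤ s := by linarith
  have hb : b ∈ closedBall a s := by
    rw [mem_closedBall, dist_eq_norm, ← norm_sub_rev]
    exact le_max_right _ _
  have ha' : a ∈ closedBall a s := mem_closedBall_self hs.le
  have hsub : closedBall c r ⊆ closedBall a s := by
    apply closedBall_subset_closedBall'
    have : dist c a ≤ 2 * r := by rw [dist_comm]; exact ha
    linarith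
  have h1 := (avg_le hn hq w c a hr hrs hsub).trans (le_cubeSup hs ha' hb)
  rw [deltaQ, ENNReal.ofReal_mul (norm_nonneg _), mul_assoc]
  exact mul_le_mul_right h1 _

lemma chain_lower {n : ℕ} {q : ℝ} (hn : 1 ≤ n) (hq : (n : ℝ) ≤ q) (w : (Fin n → ℝ) → ℝ≥0∞)
    {c : Fin n → ℝ} {r : ℝ} (hr : 0 < r) {x y : Fin n → ℝ}
    (hx : x ∈ closedBall c r) (hy : y ∈ closedBall c r)
    (m : ℕ) (z : ℕ → Fin n → ℝ) (hz0 : z 0 = x) (hzm : z m = y) :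
    ENNReal.ofReal ‖x - y‖ *
        ((∫⁻ u in closedBall c r, w u) / volume (closedBall c r)) ^ (1 / q)
      ≤ 16 * ∑ i ∈ Finset.range m, deltaQ n q w (z i) (z (i + 1)) := by
  classical
  set A : ℝ≥0∞ := ((∫⁻ u in closedBall c r, w u) / volume (closedBall c r)) ^ (1 / q) with hA
  have hxy2r : ‖x - y‖ ≤ 2 * r := by
    have h1 : dist x c ≤ r := hx
    have h2 : dist y c ≤ r := hy
    have := dist_triangle_right x y c
    rw [← dist_eq_norm]; linarith
  -- find the exit index k
  obtain ⟨k, hkm, hkin, hkout⟩ : ∃ k, k ≤ m ∧ (∀ i < k, z i ∈ closedBall c (2 * r)) ∧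
      (z k = y ∨ 2 * r < dist (z k) c) := by
    by_cases hall : ∀ i ≤ m, z i ∈ closedBall c (2 * r)
    · exact ⟨m, le_rfl, fun i hi => hall i hi.le, Or.inl hzm⟩
    · push_neg at hall
      obtain ⟨j, hjm, hj⟩ := hall
      have hex : ∃ i, z i ∉ closedBall c (2 * r) := ⟨j, hj⟩
      refine ⟨Nat.find hex, (Nat.find_min' hex hj).trans hjm,
        fun i hi => not_not.mp (Nat.find_min hex hi), Or.inr ?_⟩
      have := Nat.find_spec hex
      rw [mem_closedBall, not_le] at this
      exact this
  set D : ℝ := ‖z 0 - z k‖ with hD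
  have hDnn : 0 ≤ D := norm_nonneg _
  have hxyD : ‖x - y‖ ≤ 2 * D := by
    rcases hkout with hk | hk
    · rw [hD, hz0, hk]; linarith [norm_nonneg (x - y)]
    · have h1 : dist (z k) c ≤ dist (z k) (z 0) + dist (z 0) c := dist_triangle _ _ _
      have h2 : dist (z 0) c ≤ r := by rw [hz0]; exact hx
      have h3 : dist (z k) (z 0) = D := by rw [hD, dist_eq_norm, norm_sub_rev]
      linarith
  by_cases hbig : ∃ i < k, 3 * r ≤ ‖z i - z (i + 1)‖
  · -- one long edge: it alone carries mass ≥ ofReal r * A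
    obtain ⟨i₀, hi₀k, hbig⟩ := hbig
    have hΔpos : 0 < ‖z i₀ - z (i₀ + 1)‖ := lt_of_lt_of_le (by linarith) hbig
    have hmax : max (3 * r) ‖z i₀ - z (i₀ + 1)‖ = ‖z i₀ - z (i₀ + 1)‖ := max_eq_right hbig
    have hedge := edge_bound hn hq w hr (c := c) (a := z i₀) (b := z (i₀ + 1)) (hkin i₀ hi₀k)
    rw [hmax, mul_comm (‖z i₀ - z (i₀ + 1)‖), div_mul_cancel₀ r hΔpos.ne'] at hedge
    have hsum : deltaQ n q w (z i₀) (z (i₀ + 1)) ≤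
        ∑ i ∈ Finset.range m, deltaQ n q w (z i) (z (i + 1)) :=
      Finset.single_le_sum (f := fun i => deltaQ n q w (z i) (z (i + 1))) (fun i _ => zero_le) (Finset.mem_range.mpr (lt_of_lt_of_le hi₀k hkm))
    calc ENNReal.ofReal ‖x - y‖ * A ≤ ENNReal.ofReal (2 * r) * A := by
          exact mul_le_mul_left (ENNReal.ofReal_le_ofReal hxy2r) A
      _ ≤ 16 * (ENNReal.ofReal r * A) := by
          rw [ENNReal.ofReal_mul (by norm_num : (0:ℝ) ≤ 2), mul_assoc]
          refine mul_le_mul' ?_ le_rfl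
          rw [ENNReal.ofReal_ofNat]
          norm_num
      _ ≤ 16 * ∑ i ∈ Finset.range m, deltaQ n q w (z i) (z (i + 1)) := by
          gcongr
          exact hedge.trans hsum
  · push_neg at hbig
    have hedge : ∀ i < k, ENNReal.ofReal (‖z i - z (i + 1)‖ / 3) * A ≤
        deltaQ n q w (z i) (z (i + 1)) := by
      intro i hik
      have hmax : max (3 * r) ‖z i - z (i + 1)‖ = 3 * r := max_eq_left (hbig i hik).le
      have h := edge_bound hn hq w hr (c := c) (a := z i) (b := z (i + 1)) (hkin i hik)
      rw [hmax] at h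
      have : r / (3 * r) = 1 / 3 := by
        rw [eq_div_iff (by norm_num : (3:ℝ) ≠ 0)]
        field_simp
      rw [this, mul_one_div] at h
      exact h
    have hsum1 : ∑ i ∈ Finset.range k, deltaQ n q w (z i) (z (i + 1)) ≤
        ∑ i ∈ Finset.range m, deltaQ n q w (z i) (z (i + 1)) :=
      Finset.sum_le_sum_of_subset (Finset.range_subset_range.mpr hkm)
    have hsum2 : ENNReal.ofReal (D / 3) * A ≤
        ∑ i ∈ Finset.range k, deltaQ n q w (z i) (z (i + 1)) := by
      have htri : D ≤ ∑ i ∈ Finset.range k, ‖z i - z (i + 1)‖ := by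
        have := dist_le_range_sum_dist z k
        simpa [dist_eq_norm] using this
      calc ENNReal.ofReal (D / 3) * A ≤
          ENNReal.ofReal (∑ i ∈ Finset.range k, ‖z i - z (i + 1)‖ / 3) * A := by
            refine mul_le_mul_left (ENNReal.ofReal_le_ofReal ?_) A
            rw [← Finset.sum_div]
            exact div_le_div_of_nonneg_right htri (by norm_num)
        _ = ∑ i ∈ Finset.range k, ENNReal.ofReal (‖z i - z (i + 1)‖ / 3) * A := by
            rw [ENNReal.ofReal_sum_of_nonneg (fun i _ => by positivity), Finset.sum_mul]
        _ ≤ ∑ i ∈ Finset.range k, deltaQ n q w (z i) (z (i + 1)) :=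
            Finset.sum_le_sum fun i hi => hedge i (Finset.mem_range.mp hi)
    calc ENNReal.ofReal ‖x - y‖ * A ≤ ENNReal.ofReal (2 * D) * A := by
          exact mul_le_mul_left (ENNReal.ofReal_le_ofReal hxyD) A
      _ ≤ 16 * (ENNReal.ofReal (D / 3) * A) := by
          rw [show (2 : ℝ) * D = 6 * (D / 3) by ring,
            ENNReal.ofReal_mul (by norm_num : (0:ℝ) ≤ 6), mul_assoc]
          refine mul_le_mul' ?_ le_rfl
          rw [ENNReal.ofReal_ofNat]
          norm_num
      _ ≤ 16 * ∑ i ∈ Finset.range m, deltaQ n q w (z i) (z (i + 1)) := by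
          gcongr
          exact hsum2.trans hsum1

theorem stmt_general (n : ℕ) (q : ℝ) (hq : (n : ℝ) ≤ q) (w : (Fin n → ℝ) → ℝ≥0∞)
    (x y : Fin n → ℝ) :
    geoQ n q w x y ≤ deltaQ n q w x y ∧ deltaQ n q w x y ≤ 16 * geoQ n q w x y := by
  constructor
  · refine iInf_le_of_le 1 (iInf_le_of_le (fun i => if i = 0 then x else y)
      (iInf_le_of_le (by simp) (iInf_le_of_le (by simp) ?_)))
    simp [Finset.sum_range_one]
  · rcases Nat.eq_zero_or_pos n with hn | hn
    · subst hn
      have hxy : x = y := Subsingleton.elim x y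
      rw [deltaQ, hxy, sub_self, norm_zero, ENNReal.ofReal_zero, zero_mul]
      exact zero_le
    · rw [deltaQ, cubeSup]
      simp only [ENNReal.mul_iSup]
      refine iSup_le fun c => iSup_le fun r => iSup_le fun hr => iSup_le fun hx =>
        iSup_le fun hy => ?_
      rw [← ENNReal.div_le_iff' (by norm_num : (16:ℝ≥0∞) ≠ 0) (by norm_num)]
      refine le_iInf fun m => le_iInf fun z => le_iInf fun hz0 => le_iInf fun hzm => ?_
      rw [ENNReal.div_le_iff' (by norm_num : (16:ℝ≥0∞) ≠ 0) (by norm_num)]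
      exact chain_lower hn hq w hr hx hy m z hz0 hzm

theorem stmt_1 (n : ℕ) (q : ℝ) (hq : (n : ℝ) ≤ q)
    (h : (Fin n → ℝ) → ℝ) (hh : ∀ u, 0 ≤ h u)
    (hloc : LocallyIntegrable (fun u => h u ^ q) volume)
    (x y : Fin n → ℝ) :
    geoQ n q (fun u => ENNReal.ofReal (h u) ^ q) x y ≤
        deltaQ n q (fun u => ENNReal.ofReal (h u) ^ q) x y ∧
      deltaQ n q (fun u => ENNReal.ofReal (h u) ^ q) x y ≤
        16 * geoQ n q (fun u => ENNReal.ofReal (h u) ^ q) x y := by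
  exact stmt_general n q hq (fun u => ENNReal.ofReal (h u) ^ q) x y
end

section
/- Let $n \le q \le p < \infty$, let $h \in L_p(\mathbb{R}^n)$ be nonnegative, and let $d = d_q(\cdot,\cdot : h)$ be the geodesic distance associated to $\delta_q(x,y:h) = \|x-y\|\sup_{Q\ni x,y}(|Q|^{-1}\int_Q h^q)^{1/q}$. For $x \in \mathbb{R}^n$ define $v_x(t) = t \sup_{s \ge t} (|Q(x,s)|^{-1} \int_{Q(x,s)} h^q)^{1/q}$ for $t \ge 0$, where $Q(x,s)$ is the cube centered at $x$ with side $2s$. Then $\frac{1}{2} d(x,y) \le v_x(\|x-y\|) \le 16\, d(x,y)$ for all $x,y \in \mathbb{R}^n$. -/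
open MeasureTheory ENNReal Metric

/-- `v_x(t) = t · sup_{s ≥ t} (|Q(x,s)|⁻¹ ∫_{Q(x,s)} w)^{1/q}` where `Q(x,s)` is the cube
centered at `x` with side `2s`, i.e. the closed sup-norm ball of radius `s`. -/
noncomputable def vfun (n : ℕ) (q : ℝ) (w : (Fin n → ℝ) → ℝ≥0∞) (x : Fin n → ℝ) (t : ℝ) :
    ℝ≥0∞ :=
  ENNReal.ofReal t * ⨆ (s : ℝ) (_ : t ≤ s),
    ((∫⁻ u in closedBall x s, w u) / volume (closedBall x s)) ^ (1 / q)

noncomputable def avgQ (n : ℕ) (q : ℝ) (w : (Fin n → ℝ) → ℝ≥0∞) (c : Fin n → ℝ) (r : ℝ) :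
    ℝ≥0∞ :=
  ((∫⁻ u in closedBall c r, w u) / volume (closedBall c r)) ^ (1 / q)

lemma volQ {n : ℕ} (c : Fin n → ℝ) {r : ℝ} (hr : 0 ≤ r) :
    volume (closedBall c r) = ENNReal.ofReal ((2 * r) ^ n) := by
  rw [Real.volume_pi_closedBall c hr, Fintype.card_fin]

lemma div_le_c_mul_div {i₁ i₂ v₁ v₂ c : ℝ≥0∞} (hi : i₁ ≤ i₂) (hv : v₂ = c * v₁)
    (hc0 : c ≠ 0) (hct : c ≠ ⊤) : i₁ / v₁ ≤ c * (i₂ / v₂) := by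
  rw [hv, ← ENNReal.mul_div_mul_left i₁ v₁ hc0 hct, mul_div_assoc]
  exact mul_le_mul_right (ENNReal.div_le_div hi le_rfl) c

lemma two_pow_rpow_le {n : ℕ} {q : ℝ} (hq : (n : ℝ) ≤ q) (hq1 : 1 ≤ q) :
    ((2 : ℝ≥0∞) ^ n) ^ (1 / q) ≤ 2 := by
  have hq0 : (0 : ℝ) < q := lt_of_lt_of_le one_pos hq1
  rw [← ENNReal.rpow_natCast 2 n, ← ENNReal.rpow_mul]
  calc (2 : ℝ≥0∞) ^ ((n : ℝ) * (1 / q)) ≤ 2 ^ (1 : ℝ) := by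
        refine ENNReal.rpow_le_rpow_of_exponent_le one_le_two ?_
        rw [mul_one_div]
        exact div_le_one_of_le₀ hq hq0.le
    _ = 2 := ENNReal.rpow_one 2

lemma avgQ_le_two_mul {n : ℕ} {q : ℝ} (w : (Fin n → ℝ) → ℝ≥0∞) (hq : (n : ℝ) ≤ q)
    (hq1 : 1 ≤ q) {c x' : Fin n → ℝ} {r : ℝ} (hr : 0 < r)
    (hsub : closedBall c r ⊆ closedBall x' (2 * r)) :
    avgQ n q w c r ≤ 2 * avgQ n q w x' (2 * r) := by
  have hq0 : (0 : ℝ) < q := lt_of_lt_of_le one_pos hq1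
  have h1q : (0 : ℝ) ≤ 1 / q := by positivity
  have hv : volume (closedBall x' (2 * r)) = (2 : ℝ≥0∞) ^ n * volume (closedBall c r) := by
    rw [volQ _ (by linarith), volQ _ hr.le]
    rw [show (2 * (2 * r)) ^ n = 2 ^ n * (2 * r) ^ n from mul_pow 2 (2 * r) n,
      ENNReal.ofReal_mul (by positivity), ENNReal.ofReal_pow (by norm_num),
      ENNReal.ofReal_ofNat]
  have h1 : (∫⁻ u in closedBall c r, w u) / volume (closedBall c r) ≤
      (2 : ℝ≥0∞) ^ n *
        ((∫⁻ u in closedBall x' (2 * r), w u) / volume (closedBall x' (2 * r))) :=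
    div_le_c_mul_div (lintegral_mono_set hsub) hv (by positivity)
      (by simp [ENNReal.pow_ne_top])
  calc avgQ n q w c r
      ≤ ((2 : ℝ≥0∞) ^ n *
          ((∫⁻ u in closedBall x' (2 * r), w u) / volume (closedBall x' (2 * r)))) ^ (1 / q) :=
        ENNReal.rpow_le_rpow h1 h1q
    _ = ((2 : ℝ≥0∞) ^ n) ^ (1 / q) * avgQ n q w x' (2 * r) :=
        ENNReal.mul_rpow_of_nonneg _ _ h1q
    _ ≤ 2 * avgQ n q w x' (2 * r) :=
        mul_le_mul_left (two_pow_rpow_le hq hq1) _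

lemma avgQ_le_cubeSup {n : ℕ} {q : ℝ} (w : (Fin n → ℝ) → ℝ≥0∞) {c a b : Fin n → ℝ} {r : ℝ}
    (hr : 0 < r) (ha : a ∈ closedBall c r) (hb : b ∈ closedBall c r) :
    avgQ n q w c r ≤ cubeSup n q w a b :=
  le_iSup_of_le c <| le_iSup_of_le r <| le_iSup_of_le hr <| le_iSup_of_le ha <|
    le_iSup_of_le hb le_rfl

-- hard-direction per-step estimate
lemma step_bound {n : ℕ} {q : ℝ} (w : (Fin n → ℝ) → ℝ≥0∞) (hq : (n : ℝ) ≤ q) (hq1 : 1 ≤ q)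
    (avgQ_le_two_mul : ∀ {c x' : Fin n → ℝ} {r : ℝ}, 0 < r →
      closedBall c r ⊆ closedBall x' (2 * r) → avgQ n q w c r ≤ 2 * avgQ n q w x' (2 * r))
    {x a b : Fin n → ℝ} {s : ℝ} (hs : 0 < s) (ha : a ∈ closedBall x s) :
    ENNReal.ofReal (min (dist a b) s) * avgQ n q w x s ≤ 3 * deltaQ n q w a b := by
  have hq0 : (0 : ℝ) < q := lt_of_lt_of_le one_pos hq1
  have h1q : (0 : ℝ) ≤ 1 / q := by positivity
  have hax : dist a x ≤ s := mem_closedBall.1 ha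
  rcases le_or_gt (dist a b) s with hab | hab
  · -- short step: use the cube Q(x, 2s)
    have ha2 : a ∈ closedBall x (2 * s) := mem_closedBall.2 (by linarith)
    have hb2 : b ∈ closedBall x (2 * s) := mem_closedBall.2 (by
      have := dist_triangle b a x
      rw [dist_comm b a] at this
      linarith)
    have h2 : avgQ n q w x s ≤ 2 * avgQ n q w x (2 * s) :=
      avgQ_le_two_mul hs (closedBall_subset_closedBall (by linarith))
    have hcube : avgQ n q w x (2 * s) ≤ cubeSup n q w a b :=
      avgQ_le_cubeSup w (by linarith) ha2 hb2
    calc ENNReal.ofReal (min (dist a b) s) * avgQ n q w x s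
        ≤ ENNReal.ofReal (dist a b) * (2 * avgQ n q w x (2 * s)) :=
          mul_le_mul' (ENNReal.ofReal_le_ofReal (min_le_left _ _)) h2
      _ = 2 * (ENNReal.ofReal (dist a b) * avgQ n q w x (2 * s)) := by ring
      _ ≤ 2 * deltaQ n q w a b := by
          rw [deltaQ, ← dist_eq_norm]
          exact mul_le_mul_right (mul_le_mul_right hcube _) 2
      _ ≤ 3 * deltaQ n q w a b := mul_le_mul_left (by norm_num) _
  · -- long step: use the cube Q(a, d + 2s)
    set d : ℝ := dist a b with hd_def
    have hd : 0 < d := lt_trans hs hab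
    set r : ℝ := d + 2 * s with hr_def
    have hr : 0 < r := by positivity
    have hb' : b ∈ closedBall a r := mem_closedBall.2 (by rw [dist_comm]; simp [hr_def]; linarith)
    have ha' : a ∈ closedBall a r := mem_closedBall_self (by positivity)
    have hsub : closedBall x s ⊆ closedBall a r :=
      closedBall_subset_closedBall' (by rw [dist_comm x a]; simp [hr_def]; linarith)
    -- average comparison
    have h1 : ((∫⁻ u in closedBall x s, w u) / volume (closedBall x s)) *
        (volume (closedBall x s) / volume (closedBall a r)) ≤
        (∫⁻ u in closedBall a r, w u) / volume (closedBall a r) := by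
      calc ((∫⁻ u in closedBall x s, w u) / volume (closedBall x s)) *
            (volume (closedBall x s) / volume (closedBall a r))
          = ((∫⁻ u in closedBall x s, w u) / volume (closedBall x s) *
              volume (closedBall x s)) / volume (closedBall a r) := (mul_div_assoc _ _ _).symm
        _ ≤ (∫⁻ u in closedBall x s, w u) / volume (closedBall a r) := by
            refine ENNReal.div_le_div ?_ le_rfl
            rw [mul_comm]
            exact ENNReal.mul_div_le
        _ ≤ (∫⁻ u in closedBall a r, w u) / volume (closedBall a r) :=
            ENNReal.div_le_div (lintegral_mono_set hsub) le_rfl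
    have h2 : volume (closedBall x s) / volume (closedBall a r) =
        ENNReal.ofReal ((s / r) ^ n) := by
      rw [volQ _ hs.le, volQ _ hr.le, ← ENNReal.ofReal_div_of_pos (by positivity), ← div_pow,
        mul_div_mul_left s r (by norm_num : (2:ℝ) ≠ 0)]
    have hsr1 : s / r ≤ 1 := (div_le_one hr).2 (by simp [hr_def]; linarith)
    have hsr0 : 0 < s / r := by positivity
    have h4 : s / (3 * d) ≤ ((s / r : ℝ) ^ n) ^ (1 / q) := by
      calc s / (3 * d) ≤ s / r := by
            apply div_le_div_of_nonneg_left hs.le hr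
            simp [hr_def]; linarith
        _ = (s / r) ^ (1 : ℝ) := (Real.rpow_one _).symm
        _ ≤ (s / r) ^ ((n : ℝ) * (1 / q)) := by
            refine Real.rpow_le_rpow_of_exponent_ge hsr0 hsr1 ?_
            rw [mul_one_div]
            exact div_le_one_of_le₀ hq hq0.le
        _ = ((s / r : ℝ) ^ n) ^ (1 / q) := by
            rw [Real.rpow_mul hsr0.le, Real.rpow_natCast]
    have hcube : avgQ n q w x s * ENNReal.ofReal (s / (3 * d)) ≤ cubeSup n q w a b := by
      calc avgQ n q w x s * ENNReal.ofReal (s / (3 * d))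
          ≤ avgQ n q w x s * ENNReal.ofReal (((s / r : ℝ) ^ n) ^ (1 / q)) :=
            mul_le_mul_right (ENNReal.ofReal_le_ofReal h4) _
        _ = avgQ n q w x s * (ENNReal.ofReal ((s / r : ℝ) ^ n)) ^ (1 / q) := by
            rw [ENNReal.ofReal_rpow_of_nonneg (by positivity) h1q]
        _ = (((∫⁻ u in closedBall x s, w u) / volume (closedBall x s)) *
              (volume (closedBall x s) / volume (closedBall a r))) ^ (1 / q) := by
            rw [avgQ, ← ENNReal.mul_rpow_of_nonneg _ _ h1q, h2]
        _ ≤ ((∫⁻ u in closedBall a r, w u) / volume (closedBall a r)) ^ (1 / q) :=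
            ENNReal.rpow_le_rpow h1 h1q
        _ ≤ cubeSup n q w a b := avgQ_le_cubeSup w hr ha' hb'
    have hmin : min (dist a b) s = s := min_eq_right hab.le
    calc ENNReal.ofReal (min (dist a b) s) * avgQ n q w x s
        = 3 * (ENNReal.ofReal (s / 3) * avgQ n q w x s) := by
          rw [hmin, ← mul_assoc, show (3 : ℝ≥0∞) = ENNReal.ofReal 3 from
            (ENNReal.ofReal_ofNat 3).symm, ← ENNReal.ofReal_mul (by norm_num),
            show (3 : ℝ) * (s / 3) = s from by ring]
      _ = 3 * (ENNReal.ofReal d * (avgQ n q w x s * ENNReal.ofReal (s / (3 * d)))) := by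
          rw [show (s / 3 : ℝ) = d * (s / (3 * d)) from by field_simp,
            ENNReal.ofReal_mul hd.le]
          ring
      _ ≤ 3 * (ENNReal.ofReal d * cubeSup n q w a b) :=
          mul_le_mul_right (mul_le_mul_right hcube _) _
      _ = 3 * deltaQ n q w a b := by rw [deltaQ, ← dist_eq_norm]

lemma min_add_min {a b s : ℝ} (ha : 0 ≤ a) (hb : 0 ≤ b) (hs : 0 ≤ s) :
    min (a + b) s ≤ min a s + min b s := by
  rcases le_total a s with hA | hA
  · rcases le_total b s with hB | hB
    · rw [min_eq_left hA, min_eq_left hB]; exact min_le_left _ _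
    · have h1 : min (a + b) s ≤ s := min_le_right _ _
      have h2 : 0 ≤ min a s := le_min ha hs
      rw [min_eq_right hB]; linarith
  · have h1 : min (a + b) s ≤ s := min_le_right _ _
    have h2 : 0 ≤ min b s := le_min hb hs
    rw [min_eq_right hA]; linarith

lemma min_sum {s : ℝ} (hs : 0 ≤ s) (d : ℕ → ℝ) (hd : ∀ i, 0 ≤ d i) (k : ℕ) :
    min (∑ i ∈ Finset.range k, d i) s ≤ ∑ i ∈ Finset.range k, min (d i) s := by
  induction k with
  | zero => simp [hs]
  | succ k ih =>
    rw [Finset.sum_range_succ, Finset.sum_range_succ]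
    have h0 : 0 ≤ ∑ i ∈ Finset.range k, d i := Finset.sum_nonneg fun i _ => hd i
    calc min ((∑ i ∈ Finset.range k, d i) + d k) s
        ≤ min (∑ i ∈ Finset.range k, d i) s + min (d k) s := min_add_min h0 (hd k) hs
      _ ≤ (∑ i ∈ Finset.range k, min (d i) s) + min (d k) s := by linarith

lemma exists_good_k {n : ℕ} {x y : Fin n → ℝ} {s : ℝ} (hs : 0 < s) (hxy : dist x y ≤ s)
    (m : ℕ) (z : ℕ → Fin n → ℝ) (h0 : z 0 = x) (hm : z m = y) :
    ∃ k ≤ m, (∀ i < k, z i ∈ closedBall x s) ∧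
      dist x y ≤ ∑ i ∈ Finset.range k, min (dist (z i) (z (i + 1))) s := by
  have key : ∀ k : ℕ, min (dist (z 0) (z k)) s ≤
      ∑ i ∈ Finset.range k, min (dist (z i) (z (i + 1))) s := fun k =>
    le_trans (min_le_min (dist_le_range_sum_dist z k) le_rfl)
      (min_sum hs.le _ (fun i => dist_nonneg) k)
  by_cases hall : ∀ i, i < m → z i ∈ closedBall x s
  · refine ⟨m, le_rfl, hall, ?_⟩
    calc dist x y = min (dist (z 0) (z m)) s := by rw [h0, hm, min_eq_left hxy]
      _ ≤ _ := key m
  · push_neg at hall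
    classical
    obtain ⟨i, him, hi⟩ := hall
    have hex : ∃ j, z j ∉ closedBall x s := ⟨i, hi⟩
    set k := Nat.find hex with hk_def
    have hkspec : z k ∉ closedBall x s := Nat.find_spec hex
    have hkmin : ∀ j < k, z j ∈ closedBall x s := fun j hj => not_not.1 (Nat.find_min hex hj)
    refine ⟨k, le_trans (Nat.find_min' hex hi) him.le, hkmin, ?_⟩
    have hzs : s ≤ dist (z 0) (z k) := by
      rw [h0]
      have := mem_closedBall.not.1 hkspec
      rw [dist_comm]
      linarith [not_le.1 this]
    calc dist x y ≤ s := hxy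
      _ = min (dist (z 0) (z k)) s := (min_eq_right hzs).symm
      _ ≤ _ := key k

lemma chain_bound {n : ℕ} {q : ℝ} (w : (Fin n → ℝ) → ℝ≥0∞) (hq : (n : ℝ) ≤ q) (hq1 : 1 ≤ q)
    {x y : Fin n → ℝ} {s : ℝ} (hs : 0 < s) (hxy : dist x y ≤ s)
    (m : ℕ) (z : ℕ → Fin n → ℝ) (h0 : z 0 = x) (hm : z m = y) :
    ENNReal.ofReal (dist x y) * avgQ n q w x s ≤
      3 * ∑ i ∈ Finset.range m, deltaQ n q w (z i) (z (i + 1)) := by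
  obtain ⟨k, hkm, hmem, hsum⟩ := exists_good_k hs hxy m z h0 hm
  calc ENNReal.ofReal (dist x y) * avgQ n q w x s
      ≤ ENNReal.ofReal (∑ i ∈ Finset.range k, min (dist (z i) (z (i + 1))) s) *
          avgQ n q w x s := mul_le_mul_left (ENNReal.ofReal_le_ofReal hsum) _
    _ = ∑ i ∈ Finset.range k,
          ENNReal.ofReal (min (dist (z i) (z (i + 1))) s) * avgQ n q w x s := by
        rw [ENNReal.ofReal_sum_of_nonneg fun i _ => le_min dist_nonneg hs.le, Finset.sum_mul]
    _ ≤ ∑ i ∈ Finset.range k, 3 * deltaQ n q w (z i) (z (i + 1)) :=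
        Finset.sum_le_sum fun i hi =>
          step_bound w hq hq1 (fun hr hsub => avgQ_le_two_mul w hq hq1 hr hsub) hs
            (hmem i (Finset.mem_range.1 hi))
    _ = 3 * ∑ i ∈ Finset.range k, deltaQ n q w (z i) (z (i + 1)) := by rw [Finset.mul_sum]
    _ ≤ 3 * ∑ i ∈ Finset.range m, deltaQ n q w (z i) (z (i + 1)) :=
        mul_le_mul_right (Finset.sum_le_sum_of_subset (Finset.range_subset_range.2 hkm)) _

theorem stmt_2 (n : ℕ) (q p : ℝ) (hq : (n : ℝ) ≤ q) (hqp : q ≤ p)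
    (h : (Fin n → ℝ) → ℝ) (hh : ∀ u, 0 ≤ h u)
    (hmem : MemLp h (ENNReal.ofReal p) volume)
    (x y : Fin n → ℝ) :
    geoQ n q (fun u => ENNReal.ofReal (h u) ^ q) x y / 2 ≤
        vfun n q (fun u => ENNReal.ofReal (h u) ^ q) x ‖x - y‖ ∧
      vfun n q (fun u => ENNReal.ofReal (h u) ^ q) x ‖x - y‖ ≤
        16 * geoQ n q (fun u => ENNReal.ofReal (h u) ^ q) x y := by
  set w : (Fin n → ℝ) → ℝ≥0∞ := fun u => ENNReal.ofReal (h u) ^ q with hw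
  by_cases hxy : x = y
  · subst hxy
    have hv : vfun n q w x ‖x - x‖ = 0 := by simp [vfun]
    have hg : geoQ n q w x x = 0 := by
      refine le_antisymm ?_ zero_le
      have h0 : geoQ n q w x x ≤
          ∑ i ∈ Finset.range 0, deltaQ n q w ((fun _ => x) i) ((fun _ => x) (i + 1)) := by
        unfold geoQ
        exact iInf_le_of_le 0 (iInf_le_of_le (fun _ => x)
          (iInf_le_of_le rfl (iInf_le_of_le rfl le_rfl)))
      simpa using h0
    rw [hv, hg]
    simp
  · have ht : 0 < ‖x - y‖ := by rw [norm_pos_iff]; exact sub_ne_zero.2 hxy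
    have hn : 1 ≤ n := by
      rcases Nat.eq_zero_or_pos n with h0 | h0
      · exfalso; apply hxy; subst h0; exact funext fun i => i.elim0
      · exact h0
    have hq1 : 1 ≤ q := le_trans (by exact_mod_cast hn) hq
    constructor
    · -- easy direction
      apply ENNReal.div_le_of_le_mul'
      have h1 : geoQ n q w x y ≤ deltaQ n q w x y := by
        have h0 : geoQ n q w x y ≤
            ∑ i ∈ Finset.range 1, deltaQ n q w
              ((fun j => if j = 0 then x else y) i)
              ((fun j => if j = 0 then x else y) (i + 1)) := by
          unfold geoQ
          exact iInf_le_of_le 1 (iInf_le_of_le (fun j => if j = 0 then x else y)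
            (iInf_le_of_le (if_pos rfl) (iInf_le_of_le (if_neg one_ne_zero) le_rfl)))
        simpa using h0
      refine le_trans h1 ?_
      unfold deltaQ vfun
      rw [← mul_assoc, mul_comm (2 : ℝ≥0∞) _, mul_assoc]
      refine mul_le_mul_right ?_ _
      unfold cubeSup
      refine iSup_le fun c => iSup_le fun r => iSup_le fun hr => iSup_le fun hx =>
        iSup_le fun hy => ?_
      have hx' : dist x c ≤ r := mem_closedBall.1 hx
      have hy' : dist y c ≤ r := mem_closedBall.1 hy
      have hsub : closedBall c r ⊆ closedBall x (2 * r) := by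
        refine closedBall_subset_closedBall' ?_
        rw [dist_comm c x]
        linarith [mem_closedBall.1 hx]
      have h2 : avgQ n q w c r ≤ 2 * avgQ n q w x (2 * r) := avgQ_le_two_mul w hq hq1 hr hsub
      have htr : ‖x - y‖ ≤ 2 * r := by
        have h3 : dist x y ≤ dist x c + dist c y := dist_triangle x c y
        rw [dist_comm c y] at h3
        rw [← dist_eq_norm]
        linarith
      refine le_trans h2 (mul_le_mul_right ?_ _)
      exact le_iSup_of_le (2 * r) (le_iSup_of_le htr le_rfl)
    · -- hard direction
      have h16 : vfun n q w x ‖x - y‖ / 16 ≤ geoQ n q w x y := by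
        unfold geoQ
        refine le_iInf fun m => le_iInf fun z => le_iInf fun h0 => le_iInf fun hm => ?_
        refine ENNReal.div_le_of_le_mul ?_
        unfold vfun
        rw [ENNReal.mul_iSup]
        refine iSup_le fun s => ?_
        rw [ENNReal.mul_iSup]
        refine iSup_le fun hts => ?_
        have hs : 0 < s := lt_of_lt_of_le ht hts
        have hcb := chain_bound w hq hq1 hs (by rw [dist_eq_norm]; exact hts) m z h0 hm
        rw [dist_eq_norm] at hcb
        refine le_trans hcb ?_
        rw [mul_comm _ (16 : ℝ≥0∞)]
        exact mul_le_mul_left (by norm_num) _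
      calc vfun n q w x ‖x - y‖ = vfun n q w x ‖x - y‖ / 16 * 16 :=
            (ENNReal.div_mul_cancel (by norm_num) (by norm_num)).symm
        _ ≤ geoQ n q w x y * 16 := mul_le_mul_left h16 _
        _ = 16 * geoQ n q w x y := mul_comm _ _
end

section
/- Let $n \le q \le p < \infty$, let $h \in L_p(\mathbb{R}^n)$ be nonnegative, and let $d$ be the geodesic distance $d_q(\cdot,\cdot:h)$. Then $d$ is pseudoconvex with constant $64$: for every $x,y \in \mathbb{R}^n$ and every $z$ on the open line segment $(x,y)$, $d(x,z) + d(z,y) \le 64\, d(x,y)$. -/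
open MeasureTheory ENNReal Metric

lemma crossing (m : ℕ) (s d : ℕ → ℝ) (D ρ : ℝ) (hD : 0 < D) (hρ0 : 0 < ρ) (hρ : ρ ≤ D/2)
    (hs0 : s 0 ≤ D) (hsnn : ∀ i, 0 ≤ s i) (hdnn : ∀ j, 0 ≤ d j)
    (hstep : ∀ j, |s (j+1) - s j| ≤ d j)
    (hsum : D ≤ ∑ j ∈ Finset.range m, d j) :
    2/13 ≤ ∑ j ∈ Finset.range m, d j / (ρ + 2 * max (s j) (s (j+1))) := by
  have hden : ∀ j, 0 < ρ + 2 * max (s j) (s (j+1)) := by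
    intro j
    have h1 := hsnn j
    have h2 := le_max_left (s j) (s (j+1))
    linarith
  have htnn : ∀ j, 0 ≤ d j / (ρ + 2 * max (s j) (s (j+1))) :=
    fun j => div_nonneg (hdnn j) (hden j).le
  have hsmallterm : ∀ j, s j ≤ 2*D → s (j+1) ≤ 2*D →
      d j / (9*D/2) ≤ d j / (ρ + 2 * max (s j) (s (j+1))) := by
    intro j h1 h2
    exact div_le_div_of_nonneg_left (hdnn j) (hden j) (by
      have := max_le h1 h2; linarith)
  by_cases hbig : ∀ i ≤ m, s i ≤ 2*D
  · have hterm : ∀ j ∈ Finset.range m,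
        d j / (9*D/2) ≤ d j / (ρ + 2 * max (s j) (s (j+1))) := by
      intro j hj
      rw [Finset.mem_range] at hj
      exact hsmallterm j (hbig j (by omega)) (hbig (j+1) (by omega))
    have h1 : D / (9*D/2) ≤ ∑ j ∈ Finset.range m, d j / (ρ + 2 * max (s j) (s (j+1))) := by
      calc D / (9*D/2) ≤ (∑ j ∈ Finset.range m, d j) / (9*D/2) :=
            (div_le_div_iff_of_pos_right (by positivity)).2 hsum
        _ = ∑ j ∈ Finset.range m, d j / (9*D/2) := Finset.sum_div _ _ _
        _ ≤ _ := Finset.sum_le_sum hterm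
    have h2 : D / (9*D/2) = 2/9 := by field_simp
    rw [h2] at h1
    linarith
  · push_neg at hbig
    obtain ⟨i₀, hi₀m, hi₀⟩ := hbig
    have hex : ∃ i, i ≤ m ∧ 2*D < s i := ⟨i₀, hi₀m, hi₀⟩
    classical
    obtain ⟨hi₁m, hi₁big⟩ := Nat.find_spec hex
    have hi₁ne : Nat.find hex ≠ 0 := by
      intro h0
      rw [h0] at hi₁big
      linarith
    obtain ⟨k, hk⟩ : ∃ k, Nat.find hex = k + 1 := ⟨Nat.find hex - 1, by omega⟩
    rw [hk] at hi₁m hi₁big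
    have hksmall : ∀ i ≤ k, s i ≤ 2*D := by
      intro i hik
      by_contra hc
      push_neg at hc
      exact Nat.find_min hex (by omega) ⟨by omega, hc⟩
    have htele : s (k+1) - s 0 ≤ ∑ j ∈ Finset.range (k+1), d j := by
      have he : s (k+1) - s 0 = ∑ j ∈ Finset.range (k+1), (s (j+1) - s j) :=
        (Finset.sum_range_sub s (k+1)).symm
      rw [he]
      exact Finset.sum_le_sum fun j _ => (le_abs_self _).trans (hstep j)
    rw [Finset.sum_range_succ] at htele
    set a := d k with ha
    set L := ∑ j ∈ Finset.range k, d j with hL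
    have hLnn : 0 ≤ L := Finset.sum_nonneg fun j _ => hdnn j
    have hLa : D ≤ L + a := by linarith
    have hterm : ∀ j ∈ Finset.range k,
        d j / (9*D/2) ≤ d j / (ρ + 2 * max (s j) (s (j+1))) := by
      intro j hj
      rw [Finset.mem_range] at hj
      exact hsmallterm j (hksmall j (by omega)) (hksmall (j+1) (by omega))
    have htermk : a / (9*D/2 + 2*a) ≤ d k / (ρ + 2 * max (s k) (s (k+1))) := by
      have h1 : s k ≤ 2*D := hksmall k le_rfl
      have h2 : s (k+1) ≤ 2*D + a := by
        have h3 := (abs_le.1 (hstep k)).2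
        linarith
      have hmax : max (s k) (s (k+1)) ≤ 2*D + a := max_le (by have := hdnn k; linarith) h2
      exact div_le_div_of_nonneg_left (hdnn k) (hden k) (by linarith)
    have hsub : ∑ j ∈ Finset.range (k+1), d j / (ρ + 2 * max (s j) (s (j+1)))
        ≤ ∑ j ∈ Finset.range m, d j / (ρ + 2 * max (s j) (s (j+1))) :=
      Finset.sum_le_sum_of_subset_of_nonneg (Finset.range_subset_range.2 (by omega))
        (fun j _ _ => htnn j)
    rw [Finset.sum_range_succ] at hsub
    have hsum1 : L / (9*D/2) + a / (9*D/2 + 2*a)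
        ≤ ∑ j ∈ Finset.range m, d j / (ρ + 2 * max (s j) (s (j+1))) := by
      have h1 : L / (9*D/2) ≤ ∑ j ∈ Finset.range k, d j / (ρ + 2 * max (s j) (s (j+1))) := by
        rw [hL, Finset.sum_div]
        exact Finset.sum_le_sum hterm
      linarith
    have hmain : 2/13 ≤ L / (9*D/2) + a / (9*D/2 + 2*a) := by
      have hann : 0 ≤ a := hdnn k
      rcases le_or_gt D a with hc | hc
      · have h1 : 2/13 ≤ a / (9*D/2 + 2*a) := by
          rw [div_le_div_iff₀ (by norm_num) (by linarith)]
          nlinarith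
        have h2 : 0 ≤ L / (9*D/2) := by positivity
        linarith
      · have h3 : a / (13*D/2) ≤ a / (9*D/2 + 2*a) :=
          div_le_div_of_nonneg_left hann (by linarith) (by linarith)
        have h4 : (D - a) / (13*D/2) ≤ L / (9*D/2) := by
          have h5 : (D - a) / (13*D/2) ≤ (D - a) / (9*D/2) :=
            div_le_div_of_nonneg_left (by linarith) (by positivity) (by linarith)
          have h6 : (D - a) / (9*D/2) ≤ L / (9*D/2) :=
            (div_le_div_iff_of_pos_right (by positivity)).2 (by linarith)
          linarith
        have h7 : (D - a) / (13*D/2) + a / (13*D/2) = 2/13 := by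
          field_simp
          ring
        linarith
    linarith

lemma avg_enlarge (n : ℕ) (hn : n ≠ 0) {q : ℝ} (hq : (n:ℝ) ≤ q)
    (w : (Fin n → ℝ) → ℝ≥0∞) (c : Fin n → ℝ) {r R : ℝ} (hr : 0 < r) (hR : 0 ≤ R) :
    ((∫⁻ u in closedBall c r, w u) / volume (closedBall c r)) ^ (1/q)
      ≤ ENNReal.ofReal ((r+R)/r) *
        ((∫⁻ u in closedBall c (r+R), w u) / volume (closedBall c (r+R))) ^ (1/q) := by
  have hn1 : (1:ℝ) ≤ (n:ℝ) := by exact_mod_cast Nat.one_le_iff_ne_zero.2 hn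
  have hq0 : (0:ℝ) < q := by linarith
  set I := ∫⁻ u in closedBall c r, w u with hI_def
  set I' := ∫⁻ u in closedBall c (r+R), w u with hI'_def
  have hI : I ≤ I' := lintegral_mono_set (closedBall_subset_closedBall (by linarith))
  have hV : volume (closedBall c r) = ENNReal.ofReal ((2*r)^n) := by
    rw [Real.volume_pi_closedBall c hr.le, Fintype.card_fin]
  have hV' : volume (closedBall c (r+R)) = ENNReal.ofReal ((2*(r+R))^n) := by
    rw [Real.volume_pi_closedBall c (by linarith), Fintype.card_fin]
  set u₀ : ℝ := (r+R)/r with hu₀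
  have hu1 : (1:ℝ) ≤ u₀ := by rw [hu₀, le_div_iff₀ hr]; linarith
  have hu0 : (0:ℝ) < u₀ := by linarith
  set K : ℝ≥0∞ := ENNReal.ofReal (u₀^n) with hK_def
  have hKV : K * ENNReal.ofReal ((2*r)^n) = ENNReal.ofReal ((2*(r+R))^n) := by
    rw [← ENNReal.ofReal_mul (by positivity), ← mul_pow]
    congr 2
    rw [hu₀]
    field_simp
  have hK0 : K ≠ 0 := by
    rw [hK_def, Ne, ENNReal.ofReal_eq_zero, not_le]
    positivity
  have hKtop : K ≠ ⊤ := ENNReal.ofReal_ne_top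
  have h2 : I' / volume (closedBall c r) = K * (I' / volume (closedBall c (r+R))) := by
    rw [hV, hV', ← hKV, ← mul_div_assoc, ENNReal.mul_div_mul_left I' _ hK0 hKtop]
  have h3 : (I / volume (closedBall c r)) ^ (1/q)
      ≤ (K * (I' / volume (closedBall c (r+R)))) ^ (1/q) := by
    apply ENNReal.rpow_le_rpow _ (by positivity)
    rw [← h2]
    exact ENNReal.div_le_div_right hI _
  have h4 : (K * (I' / volume (closedBall c (r+R)))) ^ (1/q)
      = K ^ (1/q) * (I' / volume (closedBall c (r+R))) ^ (1/q) :=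
    ENNReal.mul_rpow_of_nonneg _ _ (by positivity)
  have h5 : K ^ (1/q) ≤ ENNReal.ofReal u₀ := by
    rw [hK_def, ENNReal.ofReal_rpow_of_pos (by positivity)]
    apply ENNReal.ofReal_le_ofReal
    calc (u₀^n) ^ (1/q) = (u₀ ^ (n:ℝ)) ^ (1/q) := by rw [Real.rpow_natCast]
      _ = u₀ ^ ((n:ℝ) * (1/q)) := by rw [← Real.rpow_mul (by positivity)]
      _ ≤ u₀ ^ (1:ℝ) := by
          apply Real.rpow_le_rpow_of_exponent_le hu1
          rw [mul_one_div, div_le_one hq0]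
          exact hq
      _ = u₀ := Real.rpow_one u₀
  calc (I / volume (closedBall c r)) ^ (1/q)
      ≤ K ^ (1/q) * (I' / volume (closedBall c (r+R))) ^ (1/q) := h4 ▸ h3
    _ ≤ ENNReal.ofReal u₀ * (I' / volume (closedBall c (r+R))) ^ (1/q) :=
        mul_le_mul_left h5 _

lemma deltaQ_le_key (n : ℕ) (hn : n ≠ 0) {q : ℝ} (hq : (n:ℝ) ≤ q)
    (w : (Fin n → ℝ) → ℝ≥0∞) (a b u v : Fin n → ℝ)
    {R : ℝ} (hu : dist u b ≤ R) (hv : dist v b ≤ R) :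
    deltaQ n q w a b ≤ ENNReal.ofReal (dist a b + 2*R) * cubeSup n q w u v := by
  have hR0 : 0 ≤ R := le_trans dist_nonneg hu
  rw [deltaQ, ← dist_eq_norm, cubeSup]
  simp only [ENNReal.mul_iSup]
  refine iSup_le fun c => iSup_le fun r => iSup_le fun hr => iSup_le fun hac => iSup_le fun hbc => ?_
  rw [mem_closedBall] at hac hbc
  have hd2r : dist a b ≤ 2*r := by
    have := dist_triangle a c b
    rw [dist_comm c b] at this
    linarith
  have hub : ((∫⁻ u' in closedBall c (r+R), w u') / volume (closedBall c (r+R))) ^ (1/q)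
      ≤ cubeSup n q w u v := by
    rw [cubeSup]
    have h1 : u ∈ closedBall c (r+R) := by
      rw [mem_closedBall]
      calc dist u c ≤ dist u b + dist b c := dist_triangle u b c
        _ ≤ R + r := add_le_add hu hbc
        _ = r + R := by ring
    have h2 : v ∈ closedBall c (r+R) := by
      rw [mem_closedBall]
      calc dist v c ≤ dist v b + dist b c := dist_triangle v b c
        _ ≤ R + r := add_le_add hv hbc
        _ = r + R := by ring
    exact le_iSup_of_le c (le_iSup_of_le (r+R) (le_iSup_of_le (by linarith)
      (le_iSup_of_le h1 (le_iSup_of_le h2 le_rfl))))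
  calc ENNReal.ofReal (dist a b)
        * ((∫⁻ u' in closedBall c r, w u') / volume (closedBall c r)) ^ (1/q)
      ≤ ENNReal.ofReal (dist a b) * (ENNReal.ofReal ((r+R)/r)
          * ((∫⁻ u' in closedBall c (r+R), w u') / volume (closedBall c (r+R))) ^ (1/q)) :=
        mul_le_mul_right (avg_enlarge n hn hq w c hr hR0) _
    _ ≤ ENNReal.ofReal (dist a b) * (ENNReal.ofReal ((r+R)/r) * cubeSup n q w u v) :=
        mul_le_mul_right (mul_le_mul_right hub _) _
    _ = ENNReal.ofReal (dist a b * ((r+R)/r)) * cubeSup n q w u v := by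
        rw [← mul_assoc, ← ENNReal.ofReal_mul dist_nonneg]
    _ ≤ ENNReal.ofReal (dist a b + 2*R) * cubeSup n q w u v := by
        apply mul_le_mul_left
        apply ENNReal.ofReal_le_ofReal
        rw [div_eq_mul_inv, ← mul_assoc]
        rw [mul_inv_le_iff₀ hr]
        nlinarith [dist_nonneg (x := a) (y := b)]

lemma cubeSup_comm (n : ℕ) (q : ℝ) (w : (Fin n → ℝ) → ℝ≥0∞) (x y : Fin n → ℝ) :
    cubeSup n q w x y = cubeSup n q w y x := by
  unfold cubeSup
  apply le_antisymm <;>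
  · refine iSup_le fun c => iSup_le fun r => iSup_le fun hr => iSup_le fun h1 =>
      iSup_le fun h2 => ?_
    exact le_iSup_of_le c (le_iSup_of_le r (le_iSup_of_le hr
      (le_iSup_of_le h2 (le_iSup_of_le h1 le_rfl))))

lemma deltaQ_comm (n : ℕ) (q : ℝ) (w : (Fin n → ℝ) → ℝ≥0∞) (x y : Fin n → ℝ) :
    deltaQ n q w x y = deltaQ n q w y x := by
  rw [deltaQ, deltaQ, norm_sub_rev, cubeSup_comm]

lemma geoQ_le_chain (n : ℕ) (q : ℝ) (w : (Fin n → ℝ) → ℝ≥0∞) (x y : Fin n → ℝ)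
    (m : ℕ) (zc : ℕ → Fin n → ℝ) (h0 : zc 0 = x) (hm : zc m = y) :
    geoQ n q w x y ≤ ∑ i ∈ Finset.range m, deltaQ n q w (zc i) (zc (i + 1)) := by
  rw [geoQ]
  exact iInf_le_of_le m (iInf_le_of_le zc (iInf_le_of_le h0 (iInf_le _ hm)))

lemma geoQ_self (n : ℕ) (q : ℝ) (w : (Fin n → ℝ) → ℝ≥0∞) (x : Fin n → ℝ) :
    geoQ n q w x x = 0 :=
  le_antisymm (by simpa using geoQ_le_chain n q w x x 0 (fun _ => x) rfl rfl) zero_le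

lemma main_pseudoconvex (n : ℕ) (q : ℝ) (hq : (n : ℝ) ≤ q)
    (w : (Fin n → ℝ) → ℝ≥0∞) (x y z : Fin n → ℝ) (hz : z ∈ openSegment ℝ x y) :
    geoQ n q w x z + geoQ n q w z y ≤ 64 * geoQ n q w x y := by
  classical
  by_cases hxy : x = y
  · subst hxy
    rw [openSegment_same] at hz
    rw [Set.mem_singleton_iff] at hz
    subst hz
    simp [geoQ_self]
  have hn : n ≠ 0 := by
    intro h0
    subst h0
    exact hxy (funext fun i => i.elim0)
  obtain ⟨a, b, ha, hb, hab, hzeq⟩ := hz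
  have hD : 0 < dist x y := dist_pos.2 hxy
  set D := dist x y with hDdef
  -- key distances to z
  have hzx : z - x = b • (y - x) := by
    rw [← hzeq, show a = 1 - b by linarith]; module
  have hzy : z - y = a • (x - y) := by
    rw [← hzeq, show b = 1 - a by linarith]; module
  have hdxz : dist x z = b * D := by
    rw [dist_comm x z, dist_eq_norm, hzx, norm_smul, Real.norm_eq_abs, abs_of_pos hb,
      hDdef, dist_eq_norm, norm_sub_rev]
  have hdyz : dist y z = a * D := by
    rw [dist_comm y z, dist_eq_norm, hzy, norm_smul, Real.norm_eq_abs, abs_of_pos ha,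
      hDdef, dist_eq_norm]
  suffices H : ∀ (m : ℕ) (zc : ℕ → Fin n → ℝ), zc 0 = x → zc m = y →
      geoQ n q w x z + geoQ n q w z y
        ≤ 64 * ∑ i ∈ Finset.range m, deltaQ n q w (zc i) (zc (i + 1)) by
    by_cases htop : geoQ n q w x y = ⊤
    · rw [htop, ENNReal.mul_top (by norm_num)]
      exact le_top
    · apply ENNReal.le_of_forall_pos_le_add
      intro ε hε _
      have hε64 : (ε : ℝ≥0∞) / 64 ≠ 0 := by
        simp only [Ne, ENNReal.div_eq_zero_iff, ENNReal.coe_eq_zero, not_or]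
        exact ⟨fun h => hε.ne' (by exact_mod_cast h), by norm_num⟩
      have hlt : geoQ n q w x y < geoQ n q w x y + (ε : ℝ≥0∞) / 64 :=
        ENNReal.lt_add_right htop hε64
      have h2 : (⨅ (m : ℕ) (zc : ℕ → Fin n → ℝ) (_ : zc 0 = x) (_ : zc m = y),
          ∑ i ∈ Finset.range m, deltaQ n q w (zc i) (zc (i + 1)))
            < geoQ n q w x y + (ε : ℝ≥0∞) / 64 := hlt
      simp only [iInf_lt_iff] at h2
      obtain ⟨m, zc, h0, hm, hchain⟩ := h2
      calc geoQ n q w x z + geoQ n q w z y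
          ≤ 64 * ∑ i ∈ Finset.range m, deltaQ n q w (zc i) (zc (i + 1)) := H m zc h0 hm
        _ ≤ 64 * (geoQ n q w x y + (ε : ℝ≥0∞) / 64) := mul_le_mul_right hchain.le _
        _ = 64 * geoQ n q w x y + 64 * ((ε : ℝ≥0∞) / 64) := mul_add _ _ _
        _ = 64 * geoQ n q w x y + ε := by
            rw [ENNReal.mul_div_cancel' (by norm_num) (by norm_num)]
  intro m zc h0 hm
  set S := ∑ i ∈ Finset.range m, deltaQ n q w (zc i) (zc (i + 1)) with hSdef
  obtain ⟨k, hkmem, hkmin⟩ :=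
    Finset.exists_min_image (Finset.range (m+1)) (fun i => dist (zc i) z)
      ⟨0, Finset.mem_range.2 (by omega)⟩
  rw [Finset.mem_range] at hkmem
  have hkm : k ≤ m := by omega
  -- the shifted tail sum is bounded by S
  have hshift : ∑ i ∈ Finset.range (m - k), deltaQ n q w (zc (k + i)) (zc (k + i + 1)) ≤ S := by
    have e : ∑ i ∈ Finset.Ico k m, deltaQ n q w (zc i) (zc (i + 1))
        = ∑ i ∈ Finset.range (m - k), deltaQ n q w (zc (k + i)) (zc (k + i + 1)) :=
      Finset.sum_Ico_eq_sum_range (fun j => deltaQ n q w (zc j) (zc (j + 1))) k m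
    rw [← e, hSdef, Finset.range_eq_Ico]
    exact Finset.sum_le_sum_of_subset (Finset.Ico_subset_Ico (Nat.zero_le k) le_rfl)
  have hhead : ∑ i ∈ Finset.range k, deltaQ n q w (zc i) (zc (i + 1)) ≤ S :=
    Finset.sum_le_sum_of_subset (Finset.range_subset_range.2 hkm)
  by_cases hρ : zc k = z
  · -- chain passes through z
    have g1 : geoQ n q w x z ≤ ∑ i ∈ Finset.range k, deltaQ n q w (zc i) (zc (i + 1)) :=
      geoQ_le_chain n q w x z k zc h0 hρ
    have g2 : geoQ n q w z y
        ≤ ∑ i ∈ Finset.range (m - k), deltaQ n q w (zc (k + i)) (zc (k + i + 1)) := by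
      have := geoQ_le_chain n q w z y (m - k) (fun i => zc (k + i))
        (by simpa using hρ) (by show zc (k + (m - k)) = y; rw [show k + (m - k) = m by omega]; exact hm)
      simpa [add_assoc] using this
    calc geoQ n q w x z + geoQ n q w z y ≤ S + S := add_le_add (g1.trans hhead) (g2.trans hshift)
      _ = 2 * S := (two_mul S).symm
      _ ≤ 64 * S := mul_le_mul_left (by norm_num) S
  · -- the chain misses z; insert one extra jump at the closest point
    have hρpos : 0 < dist (zc k) z := dist_pos.2 hρ
    set ρ := dist (zc k) z with hρdef
    have hden : ∀ j : ℕ, 0 < ρ + 2 * max (dist (zc j) z) (dist (zc (j+1)) z) := by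
      intro j
      have h1 : (0:ℝ) ≤ dist (zc j) z := dist_nonneg
      have h2 := le_max_left (dist (zc j) z) (dist (zc (j+1)) z)
      linarith
    -- crossing estimate
    have hρhalf : ρ ≤ D / 2 := by
      have h1 : ρ ≤ dist (zc 0) z := hkmin 0 (Finset.mem_range.2 (by omega))
      have h2 : ρ ≤ dist (zc m) z := hkmin m (Finset.mem_range.2 (by omega))
      rw [h0, hdxz] at h1
      rw [hm, hdyz] at h2
      rcases le_total a b with hc | hc
      · nlinarith
      · nlinarith
    have hs0le : dist (zc 0) z ≤ D := by
      rw [h0, hdxz]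
      nlinarith
    have hsumD : D ≤ ∑ j ∈ Finset.range m, dist (zc j) (zc (j+1)) := by
      rw [hDdef, ← h0, ← hm]
      exact dist_le_range_sum_dist zc m
    have hstep : ∀ j : ℕ, |dist (zc (j+1)) z - dist (zc j) z| ≤ dist (zc j) (zc (j+1)) := by
      intro j
      have := abs_dist_sub_le (zc (j+1)) (zc j) z
      rwa [dist_comm (zc (j+1)) (zc j)] at this
    have hcross := crossing m (fun i => dist (zc i) z) (fun j => dist (zc j) (zc (j+1)))
      D ρ hD hρpos hρhalf hs0le (fun i => dist_nonneg) (fun j => dist_nonneg) hstep hsumD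
    -- per-step comparison
    set δstar := deltaQ n q w (zc k) z with hδdef
    have hperj : ∀ j ∈ Finset.range m,
        δstar * ENNReal.ofReal (dist (zc j) (zc (j+1))
            / (ρ + 2 * max (dist (zc j) z) (dist (zc (j+1)) z)))
          ≤ deltaQ n q w (zc j) (zc (j+1)) := by
      intro j _
      have hkey := deltaQ_le_key n hn hq w (zc k) z (zc j) (zc (j+1))
        (le_max_left (dist (zc j) z) (dist (zc (j+1)) z))
        (le_max_right (dist (zc j) z) (dist (zc (j+1)) z))
      calc δstar * ENNReal.ofReal (dist (zc j) (zc (j+1))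
              / (ρ + 2 * max (dist (zc j) z) (dist (zc (j+1)) z)))
          ≤ (ENNReal.ofReal (ρ + 2 * max (dist (zc j) z) (dist (zc (j+1)) z))
              * cubeSup n q w (zc j) (zc (j+1)))
            * ENNReal.ofReal (dist (zc j) (zc (j+1))
              / (ρ + 2 * max (dist (zc j) z) (dist (zc (j+1)) z))) :=
            mul_le_mul_left hkey _
        _ = ENNReal.ofReal ((ρ + 2 * max (dist (zc j) z) (dist (zc (j+1)) z))
              * (dist (zc j) (zc (j+1))
              / (ρ + 2 * max (dist (zc j) z) (dist (zc (j+1)) z))))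
            * cubeSup n q w (zc j) (zc (j+1)) := by
            rw [mul_right_comm, ← ENNReal.ofReal_mul (hden j).le]
        _ = ENNReal.ofReal (dist (zc j) (zc (j+1))) * cubeSup n q w (zc j) (zc (j+1)) := by
            rw [mul_div_cancel₀ _ (hden j).ne']
        _ = deltaQ n q w (zc j) (zc (j+1)) := by rw [deltaQ, dist_eq_norm]
    have hsumT : δstar * ENNReal.ofReal (∑ j ∈ Finset.range m, dist (zc j) (zc (j+1))
        / (ρ + 2 * max (dist (zc j) z) (dist (zc (j+1)) z))) ≤ S := by
      rw [ENNReal.ofReal_sum_of_nonneg (fun j _ => div_nonneg dist_nonneg (hden j).le),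
        Finset.mul_sum]
      exact Finset.sum_le_sum hperj
    have hδ : δstar ≤ S * ENNReal.ofReal (13/2) := by
      have h1 : δstar * ENNReal.ofReal (2/13) ≤ S :=
        le_trans (mul_le_mul_right (ENNReal.ofReal_le_ofReal hcross) _) hsumT
      calc δstar = δstar * ENNReal.ofReal (2/13) * ENNReal.ofReal (13/2) := by
            rw [mul_assoc, ← ENNReal.ofReal_mul (by norm_num)]
            norm_num
        _ ≤ S * ENNReal.ofReal (13/2) := mul_le_mul_left h1 _
    -- chain from x to z
    have g1 : geoQ n q w x z
        ≤ (∑ i ∈ Finset.range k, deltaQ n q w (zc i) (zc (i + 1))) + δstar := by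
      have hch := geoQ_le_chain n q w x z (k + 1) (fun i => if i ≤ k then zc i else z)
        (by simp [h0]) (by simp)
      rw [Finset.sum_range_succ] at hch
      have e1 : ∑ i ∈ Finset.range k,
          deltaQ n q w ((fun i => if i ≤ k then zc i else z) i)
            ((fun i => if i ≤ k then zc i else z) (i + 1))
          = ∑ i ∈ Finset.range k, deltaQ n q w (zc i) (zc (i + 1)) := by
        apply Finset.sum_congr rfl
        intro i hi
        rw [Finset.mem_range] at hi
        show deltaQ n q w (if i ≤ k then zc i else z) (if i + 1 ≤ k then zc (i + 1) else z) = _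
        rw [if_pos (by omega : i ≤ k), if_pos (by omega : i + 1 ≤ k)]
      have e2 : deltaQ n q w ((fun i => if i ≤ k then zc i else z) k)
          ((fun i => if i ≤ k then zc i else z) (k + 1)) = δstar := by
        show deltaQ n q w (if k ≤ k then zc k else z) (if k + 1 ≤ k then zc (k + 1) else z) = δstar
        rw [if_pos le_rfl, if_neg (by omega)]
      rw [e1, e2] at hch
      exact hch
    -- chain from z to y
    have g2 : geoQ n q w z y
        ≤ (∑ i ∈ Finset.range (m - k), deltaQ n q w (zc (k + i)) (zc (k + i + 1))) + δstar := by
      have hch := geoQ_le_chain n q w z y (m - k + 1)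
        (fun i => if i = 0 then z else zc (k + (i - 1)))
        (by simp) (by
          show (if m - k + 1 = 0 then z else zc (k + (m - k + 1 - 1))) = y
          rw [if_neg (by omega)]
          rw [show k + (m - k + 1 - 1) = m by omega]
          exact hm)
      rw [Finset.sum_range_succ'] at hch
      have e3 : ∑ i ∈ Finset.range (m - k),
          deltaQ n q w ((fun i => if i = 0 then z else zc (k + (i - 1))) (i + 1))
            ((fun i => if i = 0 then z else zc (k + (i - 1))) (i + 1 + 1))
          = ∑ i ∈ Finset.range (m - k), deltaQ n q w (zc (k + i)) (zc (k + i + 1)) := by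
        apply Finset.sum_congr rfl
        intro i hi
        show deltaQ n q w (if i + 1 = 0 then z else zc (k + (i + 1 - 1)))
            (if i + 1 + 1 = 0 then z else zc (k + (i + 1 + 1 - 1))) = _
        rw [if_neg (by omega : ¬ (i + 1 = 0)), if_neg (by omega : ¬ (i + 1 + 1 = 0)),
          show i + 1 - 1 = i by omega, show i + 1 + 1 - 1 = i + 1 by omega,
          show k + (i + 1) = k + i + 1 by omega]
      have e4 : deltaQ n q w ((fun i => if i = 0 then z else zc (k + (i - 1))) 0)
          ((fun i => if i = 0 then z else zc (k + (i - 1))) (0 + 1)) = δstar := by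
        show deltaQ n q w (if (0:ℕ) = 0 then z else zc (k + (0 - 1)))
            (if (0 + 1 : ℕ) = 0 then z else zc (k + (0 + 1 - 1))) = δstar
        rw [if_pos rfl, if_neg (by omega), show k + (0 + 1 - 1) = k by omega]
        exact deltaQ_comm n q w z (zc k)
      rw [e3, e4] at hch
      exact hch
    have hSδ : S + δstar ≤ S * ENNReal.ofReal (15/2) := by
      calc S + δstar ≤ S + S * ENNReal.ofReal (13/2) := add_le_add_right hδ S
        _ = S * (1 + ENNReal.ofReal (13/2)) := by rw [mul_add, mul_one]
        _ = S * ENNReal.ofReal (15/2) := by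
            congr 1
            rw [← ENNReal.ofReal_one, ← ENNReal.ofReal_add (by norm_num) (by norm_num)]
            norm_num
    calc geoQ n q w x z + geoQ n q w z y
        ≤ (S + δstar) + (S + δstar) :=
          add_le_add (g1.trans (add_le_add_left hhead δstar))
            (g2.trans (add_le_add_left hshift δstar))
      _ ≤ S * ENNReal.ofReal (15/2) + S * ENNReal.ofReal (15/2) := add_le_add hSδ hSδ
      _ = S * ENNReal.ofReal 15 := by
          rw [← mul_add, ← ENNReal.ofReal_add (by norm_num) (by norm_num)]
          norm_num
      _ ≤ 64 * S := by
          rw [mul_comm]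
          apply mul_le_mul_left
          rw [ENNReal.ofReal_ofNat]
          norm_num

theorem stmt_4 (n : ℕ) (q p : ℝ) (hq : (n : ℝ) ≤ q) (hqp : q ≤ p)
    (h : (Fin n → ℝ) → ℝ) (hh : ∀ u, 0 ≤ h u)
    (hmem : MemLp h (ENNReal.ofReal p) volume)
    (x y z : Fin n → ℝ) (hz : z ∈ openSegment ℝ x y) :
    geoQ n q (fun u => ENNReal.ofReal (h u) ^ q) x z +
        geoQ n q (fun u => ENNReal.ofReal (h u) ^ q) z y ≤
      64 * geoQ n q (fun u => ENNReal.ofReal (h u) ^ q) x y :=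
  main_pseudoconvex n q hq _ x y z hz
end

section
/- Let $n \le q \le p < \infty$, let $h \in L_p(\mathbb{R}^n)$ be nonnegative, and let $d = d_q(\cdot,\cdot:h)$ be the associated geodesic distance. Let $x,y,z \in \mathbb{R}^n$ and $\lambda \ge 1$ with $\|y-z\| \le \lambda\|x-z\|$. Then $d(y,z) \le 32\lambda\, d(x,z)$, and moreover $d(x,z)/\|x-z\| \le 32\lambda\, d(y,z)/\|y-z\|$ (when $x \ne z$ and $y \ne z$). -/
open MeasureTheory ENNReal Metric

noncomputable def Aq (n : ℕ) (q : ℝ) (w : (Fin n → ℝ) → ℝ≥0∞) (t : Fin n → ℝ) (r : ℝ) : ℝ≥0∞ :=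
  ((∫⁻ u in closedBall t r, w u) / volume (closedBall t r)) ^ (1 / q)

noncomputable def Mz (n : ℕ) (q : ℝ) (w : (Fin n → ℝ) → ℝ≥0∞) (t : Fin n → ℝ) (l : ℝ) : ℝ≥0∞ :=
  ⨆ (ρ : ℝ) (_ : l ≤ ρ ∧ 0 < ρ), Aq n q w t ρ

lemma vol_cb (n : ℕ) (t : Fin n → ℝ) {r : ℝ} (hr : 0 ≤ r) :
    volume (closedBall t r) = ENNReal.ofReal (2 * r) ^ n := by
  rw [Real.volume_pi_closedBall t hr, ← ENNReal.ofReal_pow (by linarith), Fintype.card_fin]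

lemma Aq_cmp {n : ℕ} {q : ℝ} (hq0 : 0 < q) (hnq : (n : ℝ) ≤ q)
    (w : (Fin n → ℝ) → ℝ≥0∞) {c t : Fin n → ℝ} {r s : ℝ} (hr : 0 < r) (hrs : r ≤ s)
    (hsub : closedBall c r ⊆ closedBall t s) :
    Aq n q w c r ≤ ENNReal.ofReal (s / r) * Aq n q w t s := by
  have hs : 0 < s := hr.trans_le hrs
  have hI : (∫⁻ u in closedBall c r, w u) ≤ ∫⁻ u in closedBall t s, w u :=
    lintegral_mono' (Measure.restrict_mono hsub le_rfl) le_rfl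
  set Ic := ∫⁻ u in closedBall c r, w u
  set It := ∫⁻ u in closedBall t s, w u
  set b : ℝ≥0∞ := ENNReal.ofReal (2 * r) with hb
  set d : ℝ≥0∞ := ENNReal.ofReal (2 * s) with hd
  have hb0 : b ^ n ≠ 0 := by
    simp [hb, pow_eq_zero_iff', ENNReal.ofReal_eq_zero]
    intro h; nlinarith
  have hd0 : d ^ n ≠ 0 := by
    simp [hd, pow_eq_zero_iff', ENNReal.ofReal_eq_zero]
    intro h; nlinarith
  have hdt : d ^ n ≠ ∞ := ENNReal.pow_ne_top ENNReal.ofReal_ne_top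
  have hX : ENNReal.ofReal (s / r) = d / b := by
    rw [hd, hb, ← ENNReal.ofReal_div_of_pos (by linarith)]
    congr 1
    ring
  have h1X : (1 : ℝ≥0∞) ≤ ENNReal.ofReal (s / r) := by
    rw [ENNReal.one_le_ofReal]
    rw [le_div_iff₀ hr]; linarith
  have key : It / b ^ n = (It / d ^ n) * (ENNReal.ofReal (s / r)) ^ n := by
    rw [hX, div_eq_mul_inv, div_eq_mul_inv, div_eq_mul_inv, mul_pow, ← ENNReal.inv_pow]
    rw [mul_assoc, ← mul_assoc ((d ^ n)⁻¹), ENNReal.inv_mul_cancel hd0 hdt, one_mul]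
  have hq' : (0:ℝ) ≤ 1 / q := by positivity
  calc Aq n q w c r = (Ic / b ^ n) ^ (1 / q) := by rw [Aq, vol_cb n c hr.le]
    _ ≤ (It / b ^ n) ^ (1 / q) :=
        ENNReal.rpow_le_rpow (ENNReal.div_le_div_right hI _) hq'
    _ = (It / d ^ n) ^ (1 / q) * ((ENNReal.ofReal (s / r)) ^ n) ^ (1 / q) := by
        rw [key, ENNReal.mul_rpow_of_nonneg _ _ hq']
    _ ≤ Aq n q w t s * ENNReal.ofReal (s / r) := by
        rw [Aq, vol_cb n t hs.le]
        refine mul_le_mul' le_rfl ?_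
        rw [← ENNReal.rpow_natCast (ENNReal.ofReal (s/r)) n, ← ENNReal.rpow_mul]
        calc ENNReal.ofReal (s / r) ^ ((n : ℝ) * (1 / q)) ≤ ENNReal.ofReal (s / r) ^ (1 : ℝ) := by
              refine ENNReal.rpow_le_rpow_of_exponent_le h1X ?_
              rw [mul_one_div, div_le_one hq0]; exact hnq
          _ = ENNReal.ofReal (s / r) := ENNReal.rpow_one _
    _ = ENNReal.ofReal (s / r) * Aq n q w t s := mul_comm _ _

lemma Aq_le_cubeSup {n : ℕ} {q : ℝ} (w : (Fin n → ℝ) → ℝ≥0∞) {t u v : Fin n → ℝ} {ρ : ℝ}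
    (hρ : 0 < ρ) (hu : u ∈ closedBall t ρ) (hv : v ∈ closedBall t ρ) :
    Aq n q w t ρ ≤ cubeSup n q w u v :=
  le_iSup_of_le t (le_iSup_of_le ρ (le_iSup_of_le hρ (le_iSup_of_le hu (le_iSup_of_le hv le_rfl))))

lemma cubeSup_le {n : ℕ} {q : ℝ} (hq0 : 0 < q) (hnq : (n : ℝ) ≤ q)
    (w : (Fin n → ℝ) → ℝ≥0∞) (u t : Fin n → ℝ) :
    cubeSup n q w u t ≤ ENNReal.ofReal 2 * Mz n q w t ‖u - t‖ := by
  refine iSup_le fun c => iSup_le fun r => iSup_le fun hr => iSup_le fun hu => iSup_le fun ht => ?_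
  have hsub : closedBall c r ⊆ closedBall t (2 * r) := by
    refine closedBall_subset_closedBall' ?_
    have : dist c t ≤ r := by rw [dist_comm]; exact mem_closedBall.1 ht
    linarith
  have h1 : Aq n q w c r ≤ ENNReal.ofReal (2 * r / r) * Aq n q w t (2 * r) :=
    Aq_cmp hq0 hnq w hr (by linarith) hsub
  have h2 : (2 : ℝ) * r / r = 2 := by field_simp
  have h3 : Aq n q w t (2 * r) ≤ Mz n q w t ‖u - t‖ := by
    refine le_iSup_of_le (2 * r) (le_iSup_of_le ⟨?_, by linarith⟩ le_rfl)
    have h4 : dist u t ≤ dist u c + dist c t := dist_triangle u c t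
    have h5 : dist c t ≤ r := by rw [dist_comm]; exact mem_closedBall.1 ht
    have h6 : dist u c ≤ r := mem_closedBall.1 hu
    rw [← dist_eq_norm]; linarith
  calc ((∫⁻ u in closedBall c r, w u) / volume (closedBall c r)) ^ (1 / q)
      = Aq n q w c r := rfl
    _ ≤ ENNReal.ofReal (2 * r / r) * Aq n q w t (2 * r) := h1
    _ ≤ ENNReal.ofReal 2 * Mz n q w t ‖u - t‖ := by rw [h2]; exact mul_le_mul' le_rfl h3

lemma geo_le_delta {n : ℕ} {q : ℝ} (w : (Fin n → ℝ) → ℝ≥0∞) (u t : Fin n → ℝ) :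
    geoQ n q w u t ≤ deltaQ n q w u t := by
  refine iInf_le_of_le 1 (iInf_le_of_le (fun i => if i = 0 then u else t)
    (iInf_le_of_le (by simp) (iInf_le_of_le (by simp) ?_)))
  simp [Finset.sum_range_one]

lemma geo_upper {n : ℕ} {q : ℝ} (hq0 : 0 < q) (hnq : (n : ℝ) ≤ q)
    (w : (Fin n → ℝ) → ℝ≥0∞) (u t : Fin n → ℝ) :
    geoQ n q w u t ≤ ENNReal.ofReal ‖u - t‖ * (ENNReal.ofReal 2 * Mz n q w t ‖u - t‖) :=
  (geo_le_delta w u t).trans (mul_le_mul' le_rfl (cubeSup_le hq0 hnq w u t))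

lemma real_seq (m : ℕ) (a : ℕ → ℝ) {ρ : ℝ} (hρ : 0 < ρ) (hm : a m = 0) :
    min ρ (a 0) ≤ ∑ i ∈ Finset.range m, |a i - a (i + 1)| * (ρ / max (max (a i) (a (i + 1))) ρ) := by
  obtain ⟨k, hkmem, hk⟩ := Finset.exists_max_image (Finset.range (m + 1)) a ⟨0, by simp⟩
  have hkm : k ≤ m := by simpa [Nat.lt_succ_iff] using Finset.mem_range.1 hkmem
  have hA0 : a 0 ≤ a k := hk 0 (by simp)
  set A := a k with hAdef
  set K := max A ρ with hK
  have hK0 : 0 < K := lt_of_lt_of_le hρ (le_max_right _ _)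
  -- termwise bound
  have hterm : ∀ i ∈ Finset.range m,
      |a i - a (i + 1)| * (ρ / K) ≤ |a i - a (i + 1)| * (ρ / max (max (a i) (a (i + 1))) ρ) := by
    intro i hi
    have hi' : i ∈ Finset.range (m + 1) := by
      simp only [Finset.mem_range] at *; omega
    have hi1 : i + 1 ∈ Finset.range (m + 1) := by
      simp only [Finset.mem_range] at *; omega
    have hle : max (max (a i) (a (i + 1))) ρ ≤ K := by
      refine max_le (max_le ?_ ?_) (le_max_right _ _)
      · exact le_max_of_le_left (hk i hi')
      · exact le_max_of_le_left (hk (i + 1) hi1)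
    have hpos : 0 < max (max (a i) (a (i + 1))) ρ := lt_of_lt_of_le hρ (le_max_right _ _)
    exact mul_le_mul_of_nonneg_left (div_le_div_of_nonneg_left hρ.le hpos hle) (abs_nonneg _)
  have hsum1 : (∑ i ∈ Finset.range m, |a i - a (i + 1)|) * (ρ / K)
      ≤ ∑ i ∈ Finset.range m, |a i - a (i + 1)| * (ρ / max (max (a i) (a (i + 1))) ρ) := by
    rw [Finset.sum_mul]
    exact Finset.sum_le_sum hterm
  set TV := ∑ i ∈ Finset.range m, |a i - a (i + 1)| with hTV
  have htele : ∑ i ∈ Finset.range m, (a i - a (i + 1)) = a 0 - a m := by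
    exact Finset.sum_range_sub' a m
  have hTV0 : a 0 ≤ TV := by
    calc a 0 = a 0 - a m := by rw [hm]; ring
      _ = ∑ i ∈ Finset.range m, (a i - a (i + 1)) := htele.symm
      _ ≤ |∑ i ∈ Finset.range m, (a i - a (i + 1))| := le_abs_self _
      _ ≤ TV := Finset.abs_sum_le_sum_abs _ _
  have hTV2 : 2 * A - a 0 ≤ TV := by
    have hsplit : TV = (∑ i ∈ Finset.range k, |a i - a (i + 1)|)
        + ∑ i ∈ Finset.Ico k m, |a i - a (i + 1)| := by
      rw [hTV, Finset.range_eq_Ico, ← Finset.sum_Ico_consecutive _ (Nat.zero_le k) hkm,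
        ← Finset.range_eq_Ico]
    have h1 : A - a 0 ≤ ∑ i ∈ Finset.range k, |a i - a (i + 1)| := by
      calc A - a 0 ≤ |a 0 - a k| := by rw [abs_sub_comm]; exact le_abs_self _
        _ = |∑ i ∈ Finset.range k, (a i - a (i + 1))| := by rw [Finset.sum_range_sub' a k]
        _ ≤ _ := Finset.abs_sum_le_sum_abs _ _
    have htele2 : ∑ i ∈ Finset.Ico k m, (a i - a (i + 1)) = a k - a m := by
      have h3 : ∑ i ∈ Finset.Ico 0 k, (a i - a (i + 1)) + ∑ i ∈ Finset.Ico k m, (a i - a (i + 1))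
          = ∑ i ∈ Finset.Ico 0 m, (a i - a (i + 1)) :=
        Finset.sum_Ico_consecutive _ (Nat.zero_le k) hkm
      have e1 := Finset.sum_range_sub' a k
      have e2 := Finset.sum_range_sub' a m
      rw [Finset.range_eq_Ico] at e1 e2
      linarith [h3, e1, e2]
    have h2 : A ≤ ∑ i ∈ Finset.Ico k m, |a i - a (i + 1)| := by
      calc A = a k - a m := by rw [hm]; ring
        _ ≤ |a k - a m| := le_abs_self _
        _ = |∑ i ∈ Finset.Ico k m, (a i - a (i + 1))| := by rw [htele2]
        _ ≤ _ := Finset.abs_sum_le_sum_abs _ _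
    rw [hsplit]; linarith
  refine le_trans ?_ hsum1
  rcases le_or_gt A ρ with hAρ | hAρ
  · have : K = ρ := max_eq_right hAρ
    rw [this, div_self hρ.ne', mul_one]
    exact le_trans (min_le_right _ _) hTV0
  · have hKA : K = A := max_eq_left hAρ.le
    have hA0' : 0 < A := hρ.trans hAρ
    have : ρ ≤ TV * (ρ / K) := by
      rw [hKA]
      have h1 : A ≤ TV := by linarith
      have : A * (ρ / A) ≤ TV * (ρ / A) :=
        mul_le_mul_of_nonneg_right h1 (by positivity)
      rw [mul_div_cancel₀ ρ hA0'.ne'] at this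
      exact this
    exact le_trans (min_le_left _ _) this

lemma chain_lb {n : ℕ} {q : ℝ} (hq0 : 0 < q) (hnq : (n : ℝ) ≤ q)
    (w : (Fin n → ℝ) → ℝ≥0∞) (t : Fin n → ℝ) (m : ℕ) (zs : ℕ → Fin n → ℝ)
    (hzm : zs m = t) {ρ : ℝ} (hρ : 0 < ρ) :
    ENNReal.ofReal (min ρ ‖zs 0 - t‖) * Aq n q w t ρ ≤
      ∑ i ∈ Finset.range m, deltaQ n q w (zs i) (zs (i + 1)) := by
  set a : ℕ → ℝ := fun i => ‖zs i - t‖ with ha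
  have ham : a m = 0 := by simp [ha, hzm]
  have key : ∀ i, ENNReal.ofReal (|a i - a (i + 1)| * (ρ / max (max (a i) (a (i + 1))) ρ))
      * Aq n q w t ρ ≤ deltaQ n q w (zs i) (zs (i + 1)) := by
    intro i
    set r : ℝ := max (max (a i) (a (i + 1))) ρ with hrdef
    have hρr : ρ ≤ r := le_max_right _ _
    have hr0 : 0 < r := lt_of_lt_of_le hρ hρr
    have hmemi : zs i ∈ closedBall t r := by
      rw [mem_closedBall, dist_eq_norm]
      exact le_trans (le_max_left _ _) (le_max_left _ _)
    have hmemi1 : zs (i + 1) ∈ closedBall t r := by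
      rw [mem_closedBall, dist_eq_norm]
      exact le_trans (le_max_right _ _) (le_max_left _ _)
    have hcube : Aq n q w t r ≤ cubeSup n q w (zs i) (zs (i + 1)) :=
      Aq_le_cubeSup w hr0 hmemi hmemi1
    have hAq : ENNReal.ofReal (ρ / r) * Aq n q w t ρ ≤ Aq n q w t r := by
      have h1 : Aq n q w t ρ ≤ ENNReal.ofReal (r / ρ) * Aq n q w t r :=
        Aq_cmp hq0 hnq w hρ hρr (closedBall_subset_closedBall hρr)
      calc ENNReal.ofReal (ρ / r) * Aq n q w t ρ
          ≤ ENNReal.ofReal (ρ / r) * (ENNReal.ofReal (r / ρ) * Aq n q w t r) :=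
            mul_le_mul' le_rfl h1
        _ = ENNReal.ofReal (ρ / r * (r / ρ)) * Aq n q w t r := by
            rw [ENNReal.ofReal_mul (by positivity), mul_assoc]
        _ = Aq n q w t r := by
            rw [show ρ / r * (r / ρ) = 1 by field_simp]
            simp
    have hnorm : |a i - a (i + 1)| ≤ ‖zs i - zs (i + 1)‖ := by
      have := abs_norm_sub_norm_le (zs i - t) (zs (i + 1) - t)
      rwa [sub_sub_sub_cancel_right] at this
    calc ENNReal.ofReal (|a i - a (i + 1)| * (ρ / r)) * Aq n q w t ρ
        = ENNReal.ofReal |a i - a (i + 1)| * (ENNReal.ofReal (ρ / r) * Aq n q w t ρ) := by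
          rw [ENNReal.ofReal_mul (abs_nonneg _), mul_assoc]
      _ ≤ ENNReal.ofReal ‖zs i - zs (i + 1)‖ * Aq n q w t r :=
          mul_le_mul' (ENNReal.ofReal_le_ofReal hnorm) hAq
      _ ≤ ENNReal.ofReal ‖zs i - zs (i + 1)‖ * cubeSup n q w (zs i) (zs (i + 1)) :=
          mul_le_mul' le_rfl hcube
      _ = deltaQ n q w (zs i) (zs (i + 1)) := rfl
  calc ENNReal.ofReal (min ρ ‖zs 0 - t‖) * Aq n q w t ρ
      ≤ ENNReal.ofReal (∑ i ∈ Finset.range m,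
          |a i - a (i + 1)| * (ρ / max (max (a i) (a (i + 1))) ρ)) * Aq n q w t ρ :=
        mul_le_mul' (ENNReal.ofReal_le_ofReal (real_seq m a hρ ham)) le_rfl
    _ = (∑ i ∈ Finset.range m, ENNReal.ofReal
          (|a i - a (i + 1)| * (ρ / max (max (a i) (a (i + 1))) ρ))) * Aq n q w t ρ := by
        rw [ENNReal.ofReal_sum_of_nonneg]
        intro i _
        have : (0:ℝ) ≤ ρ / max (max (a i) (a (i + 1))) ρ := by positivity
        positivity
    _ = ∑ i ∈ Finset.range m, ENNReal.ofReal
          (|a i - a (i + 1)| * (ρ / max (max (a i) (a (i + 1))) ρ)) * Aq n q w t ρ :=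
        Finset.sum_mul _ _ _
    _ ≤ ∑ i ∈ Finset.range m, deltaQ n q w (zs i) (zs (i + 1)) :=
        Finset.sum_le_sum fun i _ => key i

lemma geo_lower {n : ℕ} {q : ℝ} (hq0 : 0 < q) (hnq : (n : ℝ) ≤ q)
    (w : (Fin n → ℝ) → ℝ≥0∞) (t u : Fin n → ℝ) (l : ℝ) :
    ENNReal.ofReal (min l ‖u - t‖) * Mz n q w t l ≤ geoQ n q w u t := by
  refine le_iInf fun m => le_iInf fun zs => le_iInf fun h0 => le_iInf fun hm => ?_
  rw [Mz, ENNReal.mul_iSup]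
  refine iSup_le fun ρ => ?_
  rw [ENNReal.mul_iSup]
  refine iSup_le fun hlρ => ?_
  obtain ⟨hlρ1, hρ0⟩ := hlρ
  calc ENNReal.ofReal (min l ‖u - t‖) * Aq n q w t ρ
      ≤ ENNReal.ofReal (min ρ ‖zs 0 - t‖) * Aq n q w t ρ := by
        refine mul_le_mul' (ENNReal.ofReal_le_ofReal ?_) le_rfl
        rw [h0]
        exact min_le_min hlρ1 le_rfl
    _ ≤ _ := chain_lb hq0 hnq w t m zs hm hρ0

theorem stmt_5 (n : ℕ) (q p : ℝ) (hq : (n : ℝ) ≤ q) (hqp : q ≤ p)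
    (h : (Fin n → ℝ) → ℝ) (hh : ∀ u, 0 ≤ h u)
    (hmem : MemLp h (ENNReal.ofReal p) volume)
    (x y z : Fin n → ℝ) (lam : ℝ) (hlam : 1 ≤ lam)
    (hyz : ‖y - z‖ ≤ lam * ‖x - z‖) :
    geoQ n q (fun u => ENNReal.ofReal (h u) ^ q) y z ≤
        ENNReal.ofReal (32 * lam) * geoQ n q (fun u => ENNReal.ofReal (h u) ^ q) x z ∧
      (x ≠ z → y ≠ z →
        geoQ n q (fun u => ENNReal.ofReal (h u) ^ q) x z / ENNReal.ofReal ‖x - z‖ ≤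
          ENNReal.ofReal (32 * lam) *
            (geoQ n q (fun u => ENNReal.ofReal (h u) ^ q) y z / ENNReal.ofReal ‖y - z‖)) := by
  set w : (Fin n → ℝ) → ℝ≥0∞ := fun u => ENNReal.ofReal (h u) ^ q with hw
  rcases Nat.eq_zero_or_pos n with hn | hn
  · subst hn
    have hyz' : y = z := funext fun i => i.elim0
    have hgeo : geoQ 0 q w y z ≤ 0 := by
      refine iInf_le_of_le 0 (iInf_le_of_le (fun _ => y) (iInf_le_of_le rfl
        (iInf_le_of_le hyz' ?_)))
      simp
    constructor
    · exact le_trans hgeo (by simp)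
    · intro hx _
      exact absurd (funext fun i => i.elim0) hx
  have hq0 : 0 < q := by
    have h1 : (1 : ℝ) ≤ (n : ℝ) := by exact_mod_cast hn
    linarith
  set L : ℝ := ‖y - z‖ with hLdef
  set R : ℝ := ‖x - z‖ with hRdef
  have hL0 : 0 ≤ L := norm_nonneg _
  have hR0 : 0 ≤ R := norm_nonneg _
  have h32 : (0 : ℝ) ≤ 32 * lam := by linarith
  constructor
  · -- part 1
    have key1 : 2 * L ≤ 32 * lam * min L R := by
      rcases min_cases L R with ⟨hmin, _⟩ | ⟨hmin, hlt⟩ <;> rw [hmin]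
      · nlinarith
      · nlinarith
    calc geoQ n q w y z
        ≤ ENNReal.ofReal L * (ENNReal.ofReal 2 * Mz n q w z L) := geo_upper hq0 hq w y z
      _ = ENNReal.ofReal (2 * L) * Mz n q w z L := by
          rw [ENNReal.ofReal_mul (by norm_num : (0:ℝ) ≤ 2)]; ring
      _ ≤ ENNReal.ofReal (32 * lam * min L R) * Mz n q w z L :=
          mul_le_mul' (ENNReal.ofReal_le_ofReal key1) le_rfl
      _ = ENNReal.ofReal (32 * lam) * (ENNReal.ofReal (min L R) * Mz n q w z L) := by
          rw [ENNReal.ofReal_mul h32, mul_assoc]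
      _ ≤ ENNReal.ofReal (32 * lam) * geoQ n q w x z :=
          mul_le_mul' le_rfl (geo_lower hq0 hq w z x L)
  · -- part 2
    intro hx hy
    have hR : 0 < R := by rw [hRdef, norm_pos_iff]; exact sub_ne_zero.mpr hx
    have hL : 0 < L := by rw [hLdef, norm_pos_iff]; exact sub_ne_zero.mpr hy
    have key2 : (2 : ℝ) ≤ 32 * lam * min R L / L := by
      rw [le_div_iff₀ hL]
      rcases min_cases R L with ⟨hmin, _⟩ | ⟨hmin, _⟩ <;> rw [hmin] <;> nlinarith
    have hRne : ENNReal.ofReal R ≠ 0 := by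
      simp [ENNReal.ofReal_eq_zero]; linarith
    calc geoQ n q w x z / ENNReal.ofReal R
        ≤ ENNReal.ofReal R * (ENNReal.ofReal 2 * Mz n q w z R) / ENNReal.ofReal R :=
          ENNReal.div_le_div_right (geo_upper hq0 hq w x z) _
      _ = ENNReal.ofReal 2 * Mz n q w z R := by
          rw [mul_comm, mul_div_assoc, ENNReal.div_self hRne ENNReal.ofReal_ne_top, mul_one]
      _ ≤ ENNReal.ofReal (32 * lam * min R L / L) * Mz n q w z R :=
          mul_le_mul' (by
            rw [show ENNReal.ofReal (2:ℝ) = (2:ℝ≥0∞) by simp]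
            exact le_trans (by norm_num) (ENNReal.ofReal_le_ofReal key2) |>.trans_eq rfl) le_rfl
      _ = ENNReal.ofReal (32 * lam) *
            (ENNReal.ofReal (min R L) * Mz n q w z R / ENNReal.ofReal L) := by
          rw [ENNReal.ofReal_div_of_pos hL, ENNReal.ofReal_mul h32, div_eq_mul_inv,
            div_eq_mul_inv]
          ring
      _ ≤ ENNReal.ofReal (32 * lam) * (geoQ n q w y z / ENNReal.ofReal L) :=
          mul_le_mul' le_rfl (ENNReal.div_le_div_right (geo_lower hq0 hq w z y R) _)
end

section
/- Let $n < q \le p < \infty$ and let $h \in L_p(\mathbb{R}^n)$ be nonnegative. Then the geodesic distance $d_q(x,y:h)$ satisfies $d_q(x,y:h) \le C \|x-y\|^{1 - n/p} \|h\|_{L_p(\mathbb{R}^n)}$ for all $x,y \in \mathbb{R}^n$, where $C$ depends only on $n$, $p$, $q$. In particular $d_q(x,y:h) \to 0$ as $\|x-y\| \to 0$. -/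
open MeasureTheory ENNReal Metric

theorem stmt_6 (n : ℕ) (q p : ℝ) (hq : (n : ℝ) < q) (hqp : q ≤ p) :
    ∃ C : ℝ, 0 < C ∧ ∀ (h : (Fin n → ℝ) → ℝ), (∀ u, 0 ≤ h u) →
      MemLp h (ENNReal.ofReal p) volume →
      ∀ x y : Fin n → ℝ,
        geoQ n q (fun u => ENNReal.ofReal (h u) ^ q) x y ≤
          ENNReal.ofReal C * ENNReal.ofReal (‖x - y‖ ^ (1 - (n : ℝ) / p)) *
            eLpNorm h (ENNReal.ofReal p) volume := by
  have hn : (0:ℝ) ≤ n := n.cast_nonneg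
  have hq0 : 0 < q := lt_of_le_of_lt hn hq
  have hp0 : 0 < p := lt_of_lt_of_le hq0 hqp
  refine ⟨1, one_pos, fun h hpos hmem x y => ?_⟩
  set w : (Fin n → ℝ) → ℝ≥0∞ := fun u => ENNReal.ofReal (h u) ^ q with hw
  set S := eLpNorm h (ENNReal.ofReal p) volume with hS
  -- geoQ ≤ deltaQ x y (chain of length one)
  have hgeo : geoQ n q w x y ≤ deltaQ n q w x y := by
    have h1 : geoQ n q w x y ≤
        ∑ i ∈ Finset.range 1, deltaQ n q w
          ((fun i => if i = 0 then x else y) i) ((fun i => if i = 0 then x else y) (i + 1)) := by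
      apply iInf_le_of_le 1
      apply iInf_le_of_le (fun i => if i = 0 then x else y)
      apply iInf_le_of_le (by simp)
      apply iInf_le_of_le (by simp)
      exact le_rfl
    simpa using h1
  refine hgeo.trans ?_
  by_cases hxy : x = y
  · simp [deltaQ, hxy]
  have hd : 0 < ‖x - y‖ := by
    rw [norm_pos_iff]; exact sub_ne_zero_of_ne hxy
  set d : ℝ := ‖x - y‖ with hdd
  have hDne : ENNReal.ofReal d ≠ 0 := by simp only [ne_eq, ENNReal.ofReal_eq_zero, not_le]; exact hd
  have hDnt : ENNReal.ofReal d ≠ ⊤ := ENNReal.ofReal_ne_top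
  -- key bound on cubeSup
  have hcube : cubeSup n q w x y ≤ S * ENNReal.ofReal d ^ (-((n:ℝ) / p)) := by
    refine iSup_le fun c => iSup_le fun r => iSup_le fun hr => iSup_le fun hxc =>
      iSup_le fun hyc => ?_
    set Q := closedBall c r with hQ
    set V := volume Q with hV
    have hVval : V = ENNReal.ofReal ((2 * r) ^ n) := by
      rw [hV, hQ, Real.volume_pi_closedBall c hr.le, Fintype.card_fin]
    have hd2r : d ≤ 2 * r := by
      have := dist_triangle x c y
      have h1 : dist x c ≤ r := mem_closedBall.mp hxc
      have h2 : dist c y ≤ r := by rw [dist_comm]; exact mem_closedBall.mp hyc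
      calc d = dist x y := (dist_eq_norm x y).symm
        _ ≤ dist x c + dist c y := this
        _ ≤ r + r := add_le_add h1 h2
        _ = 2 * r := by ring
    have hVlb : ENNReal.ofReal d ^ (n:ℝ) ≤ V := by
      rw [hVval, ENNReal.rpow_natCast, ← ENNReal.ofReal_pow hd.le]
      exact ENNReal.ofReal_le_ofReal (pow_le_pow_left₀ hd.le hd2r n)
    have hVne : V ≠ 0 := by
      rw [hVval]
      simp only [ne_eq, ENNReal.ofReal_eq_zero, not_le]
      positivity
    have hVnt : V ≠ ⊤ := by rw [hVval]; exact ENNReal.ofReal_ne_top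
    set A := ∫⁻ u in Q, w u with hA
    -- A^(1/q) is the eLpNorm over Q
    have hAeq : A ^ (1/q) = eLpNorm h (ENNReal.ofReal q) (volume.restrict Q) := by
      rw [eLpNorm_eq_lintegral_rpow_enorm_toReal (by simp [hq0]) (by simp),
        ENNReal.toReal_ofReal hq0.le, hA, hw]
      congr 1
      refine lintegral_congr fun u => ?_
      rw [← Real.enorm_eq_ofReal (hpos u)]
    have hHolder : A ^ (1/q) ≤ S * V ^ (1/q - 1/p) := by
      rw [hAeq]
      calc eLpNorm h (ENNReal.ofReal q) (volume.restrict Q)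
          ≤ eLpNorm h (ENNReal.ofReal p) (volume.restrict Q) *
            (volume.restrict Q) Set.univ ^
              (1/(ENNReal.ofReal q).toReal - 1/(ENNReal.ofReal p).toReal) :=
            eLpNorm_le_eLpNorm_mul_rpow_measure_univ (ENNReal.ofReal_le_ofReal hqp)
              (hmem.1.restrict)
        _ ≤ S * V ^ (1/q - 1/p) := by
            rw [Measure.restrict_apply_univ, ENNReal.toReal_ofReal hq0.le,
              ENNReal.toReal_ofReal hp0.le]
            gcongr
            exact eLpNorm_mono_measure h Measure.restrict_le_self
    have hmain : (A / V) ^ (1/q) ≤ S * V ^ (-(1/p)) := by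
      rw [ENNReal.div_rpow_of_nonneg _ _ (by positivity)]
      calc A ^ (1/q) / V ^ (1/q) ≤ (S * V ^ (1/q - 1/p)) / V ^ (1/q) := by gcongr
        _ = S * (V ^ (1/q - 1/p) / V ^ (1/q)) := by rw [mul_div_assoc]
        _ = S * V ^ (-(1/p)) := by
            rw [← ENNReal.rpow_sub _ _ hVne hVnt]
            ring_nf
    refine hmain.trans ?_
    gcongr
    have : ENNReal.ofReal d ^ (-((n:ℝ)/p)) = (ENNReal.ofReal d ^ (n:ℝ)) ^ (-(1/p)) := by
      rw [← ENNReal.rpow_mul]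
      congr 1
      field_simp
    rw [this, ENNReal.rpow_neg, ENNReal.rpow_neg]
    exact ENNReal.inv_le_inv.mpr (ENNReal.rpow_le_rpow hVlb (by positivity))
  -- combine
  calc deltaQ n q w x y = ENNReal.ofReal d * cubeSup n q w x y := rfl
    _ ≤ ENNReal.ofReal d * (S * ENNReal.ofReal d ^ (-((n:ℝ)/p))) := by gcongr
    _ = S * (ENNReal.ofReal d ^ (1:ℝ) * ENNReal.ofReal d ^ (-((n:ℝ)/p))) := by
        rw [ENNReal.rpow_one]; ring
    _ = S * ENNReal.ofReal d ^ (1 - (n:ℝ)/p) := by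
        rw [← ENNReal.rpow_add _ _ hDne hDnt]
        ring_nf
    _ = ENNReal.ofReal 1 * ENNReal.ofReal (d ^ (1 - (n:ℝ)/p)) * S := by
        rw [ENNReal.ofReal_one, one_mul, ENNReal.ofReal_rpow_of_pos hd, mul_comm]
end
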